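/- arXiv:1902.03391 — 4 statements merged into one kernel-verified Lean document; each statement's English description precedes it below -/
import Mathlib

section
/- Let l ≥ 3, n = 2^l − 1 and k = (n−1)/2. Then dil(T_k, HT(l)) = l − 1: every bijection from the vertices of the friendship graph T_k (which has n vertices) to the vertices of the hypertree HT(l) has some edge of T_k whose endpoint images are at distance at least l − 1 in HT(l), and there exists a bijection under which every edge of T_k maps to a pair of vertices at distance at most l − 1 in HT(l). -/
open SimpleGraph

/-- Friendship graph `T_k` on `Fin (2k+1)`: hub `0` and triangles `(0, 2i-1, 2i)`. -/
def friendshipGraph (k : ℕ) : SimpleGraph (Fin (2 * k + 1)) where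
  Adj x y := x ≠ y ∧ (x.val = 0 ∨ y.val = 0 ∨
    (y.val = x.val + 1 ∧ x.val % 2 = 1) ∨ (x.val = y.val + 1 ∧ y.val % 2 = 1))
  symm := by constructor; rintro x y ⟨h1, h2⟩; exact ⟨h1.symm, by tauto⟩
  loopless := by constructor; rintro x ⟨h1, -⟩; exact h1 rfl

/-- Adjacency of hypertree labels (1-based): binary tree edges plus horizontal
edges between labels on the same level `i ≥ 2` differing by `2^(i-2)`.
The level of label `a` is `Nat.log 2 a + 1`. -/
def htAdjLbl (a b : ℕ) : Prop :=
  (b = 2 * a ∨ b = 2 * a + 1 ∨ a = 2 * b ∨ a = 2 * b + 1) ∨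
  (a ≠ b ∧ Nat.log 2 a = Nat.log 2 b ∧ 1 ≤ Nat.log 2 a ∧
    max a b - min a b = 2 ^ (Nat.log 2 a - 1))

/-- The hypertree `HT(l)` on `Fin (2^l - 1)`; vertex `x` has label `x+1`. -/
def hypertree (l : ℕ) : SimpleGraph (Fin (2 ^ l - 1)) where
  Adj x y := htAdjLbl (x.val + 1) (y.val + 1)
  symm := by
    constructor
    rintro x y (h | ⟨hne, hlog, hge, hdiff⟩)
    · left; tauto
    · right
      refine ⟨hne.symm, hlog.symm, ?_, ?_⟩
      · rw [← hlog]; exact hge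
      · rw [max_comm, min_comm, ← hlog]; exact hdiff
  loopless := by
    constructor
    rintro x (h | ⟨hne, -⟩)
    · omega
    · exact hne rfl


/-- second bit -/
def sbit (a : ℕ) : ℕ := a / 2 ^ (Nat.log 2 a - 1) % 2
/-- third bit -/
def tbit (a : ℕ) : ℕ := a / 2 ^ (Nat.log 2 a - 2) % 2

def potF (σ c a : ℕ) : ℤ :=
  if a ≤ 1 then 0 else
    (if sbit a = σ then 2 else 0) +
    (if 2 ≤ Nat.log 2 a ∧ tbit a = c then ((Nat.log 2 a : ℤ) - 1) * 2
     else ((Nat.log 2 a : ℤ) - 1) * (-2))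

lemma two_pow_pred {m : ℕ} (h : 1 ≤ m) : (2:ℕ) ^ m = 2 * 2 ^ (m - 1) := by
  rcases m with _ | e
  · omega
  · simp [pow_succ, Nat.mul_comm]

lemma log_child {a ε : ℕ} (ha : 1 ≤ a) (hε : ε ≤ 1) :
    Nat.log 2 (2 * a + ε) = Nat.log 2 a + 1 := by
  have h1 : 2 ^ Nat.log 2 a ≤ a := Nat.pow_log_le_self 2 (by omega)
  have h2 : a < 2 ^ (Nat.log 2 a + 1) := Nat.lt_pow_succ_log_self (by norm_num) a
  apply Nat.log_eq_of_pow_le_of_lt_pow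
  · rw [pow_succ]; omega
  · rw [pow_succ, pow_succ]; omega

lemma one_le_log {a : ℕ} (ha : 2 ≤ a) : 1 ≤ Nat.log 2 a := by
  have h2 : a < 2 ^ (Nat.log 2 a + 1) := Nat.lt_pow_succ_log_self (by norm_num) a
  rcases Nat.eq_zero_or_pos (Nat.log 2 a) with h | h
  · rw [h] at h2; simp at h2; omega
  · exact h

lemma sbit_child {a ε : ℕ} (ha : 2 ≤ a) (hε : ε ≤ 1) : sbit (2 * a + ε) = sbit a := by
  have hd : 1 ≤ Nat.log 2 a := one_le_log ha
  unfold sbit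
  rw [log_child (by omega) hε]
  have h1 : Nat.log 2 a + 1 - 1 = Nat.log 2 a := by omega
  rw [h1, two_pow_pred hd, ← Nat.div_div_eq_div_mul]
  congr 2
  omega

lemma tbit_child {a ε : ℕ} (ha : 2 ≤ a) (hd : 2 ≤ Nat.log 2 a) (hε : ε ≤ 1) :
    tbit (2 * a + ε) = tbit a := by
  unfold tbit
  rw [log_child (by omega) hε]
  have h1 : Nat.log 2 a + 1 - 2 = Nat.log 2 a - 1 := by omega
  have h2 : (2:ℕ) ^ (Nat.log 2 a - 1) = 2 * 2 ^ (Nat.log 2 a - 2) := by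
    have h3 : Nat.log 2 a - 1 - 1 = Nat.log 2 a - 2 := by omega
    rw [two_pow_pred (by omega : 1 ≤ Nat.log 2 a - 1), h3]
  rw [h1, h2, ← Nat.div_div_eq_div_mul]
  congr 2
  omega

lemma pot_one (σ c : ℕ) : potF σ c 1 = 0 := by simp [potF]

lemma pot_root_edge (σ c : ℕ) {ε : ℕ} (hε : ε ≤ 1) :
    potF σ c (2 + ε) - potF σ c 1 ≤ 2 ∧ potF σ c 1 - potF σ c (2 + ε) ≤ 2 := by
  rw [pot_one]
  have hlog : Nat.log 2 (2 + ε) = 1 :=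
    Nat.log_eq_of_pow_le_of_lt_pow (by omega) (by norm_num; omega)
  unfold potF
  rw [if_neg (show ¬(2 + ε ≤ 1) by omega), hlog]
  split_ifs <;> push_cast <;> simp

lemma pot_child (σ c : ℕ) {a ε : ℕ} (ha : 2 ≤ a) (hε : ε ≤ 1) :
    potF σ c (2 * a + ε) - potF σ c a ≤ 2 ∧ potF σ c a - potF σ c (2 * a + ε) ≤ 2 := by
  have hd1 : 1 ≤ Nat.log 2 a := one_le_log ha
  have hlogb := log_child (show 1 ≤ a by omega) hε
  have hsb := sbit_child ha hε
  unfold potF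
  rw [if_neg (show ¬(2 * a + ε ≤ 1) by omega), if_neg (show ¬(a ≤ 1) by omega), hlogb, hsb]
  by_cases hd2 : 2 ≤ Nat.log 2 a
  · have htb := tbit_child ha hd2 hε
    rw [htb]
    split_ifs <;> push_cast <;> omega
  · split_ifs <;> push_cast <;> omega

lemma pot_horiz (σ c : ℕ) {a b : ℕ} (hab : a < b) (hlog : Nat.log 2 a = Nat.log 2 b)
    (hd : 1 ≤ Nat.log 2 a) (hdiff : b - a = 2 ^ (Nat.log 2 a - 1)) (ha1 : 1 ≤ a) :
    potF σ c a - potF σ c b ≤ 2 ∧ potF σ c b - potF σ c a ≤ 2 := by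
  have p1 : 2 ^ Nat.log 2 a ≤ a := Nat.pow_log_le_self 2 (by omega)
  have p2 : b < 2 ^ (Nat.log 2 a + 1) := by
    rw [hlog]; exact Nat.lt_pow_succ_log_self (by norm_num) b
  have hpd : (2:ℕ) ^ Nat.log 2 a = 2 * 2 ^ (Nat.log 2 a - 1) := two_pow_pred hd
  have hps : (2:ℕ) ^ (Nat.log 2 a + 1) = 2 * 2 ^ Nat.log 2 a := by rw [pow_succ]; ring
  have hppos : 0 < (2:ℕ) ^ (Nat.log 2 a - 1) := Nat.pow_pos (by norm_num)
  have hadiv : a / 2 ^ (Nat.log 2 a - 1) = 2 := Nat.div_eq_of_lt_le (by omega) (by omega)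
  have hsa : sbit a = 0 := by unfold sbit; rw [hadiv]
  have heb : b = a + 1 * 2 ^ (Nat.log 2 a - 1) := by omega
  have hsb : sbit b = 1 := by
    unfold sbit
    rw [← hlog, heb, Nat.add_mul_div_right _ _ hppos, hadiv]
  have ha2 : 2 ≤ a := by have := Nat.one_le_two_pow (n := Nat.log 2 a); omega
  unfold potF
  rw [if_neg (show ¬(a ≤ 1) by omega), if_neg (show ¬(b ≤ 1) by omega), ← hlog, hsa, hsb]
  by_cases hd2 : 2 ≤ Nat.log 2 a
  · have hq : (2:ℕ) ^ (Nat.log 2 a - 1) = 2 * 2 ^ (Nat.log 2 a - 2) := by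
      have h3 : Nat.log 2 a - 1 - 1 = Nat.log 2 a - 2 := by omega
      rw [two_pow_pred (by omega : 1 ≤ Nat.log 2 a - 1), h3]
    have hqpos : 0 < (2:ℕ) ^ (Nat.log 2 a - 2) := Nat.pow_pos (by norm_num)
    have heb2 : b = a + 2 * 2 ^ (Nat.log 2 a - 2) := by omega
    have htb : tbit b = tbit a := by
      unfold tbit
      rw [← hlog, heb2, Nat.add_mul_div_right _ _ hqpos]
      omega
    rw [htb]
    split_ifs <;> push_cast <;> omega
  · split_ifs <;> push_cast <;> omega

lemma pot_child' (σ c : ℕ) {a ε : ℕ} (ha : 1 ≤ a) (hε : ε ≤ 1) :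
    potF σ c (2 * a + ε) - potF σ c a ≤ 2 ∧ potF σ c a - potF σ c (2 * a + ε) ≤ 2 := by
  rcases eq_or_lt_of_le ha with h1 | h1
  · have : a = 1 := h1.symm
    subst this
    have := pot_root_edge σ c hε
    rw [show 2 * 1 + ε = 2 + ε by ring]
    exact this
  · exact pot_child σ c (by omega) hε

lemma pot_adj (σ c : ℕ) {a b : ℕ} (ha : 1 ≤ a) (hb : 1 ≤ b) (h : htAdjLbl a b) :
    potF σ c a - potF σ c b ≤ 2 ∧ potF σ c b - potF σ c a ≤ 2 := by
  rcases h with (h1 | h1 | h1 | h1) | ⟨hne, hlog, hd, hdiff⟩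
  · subst h1
    have := pot_child' σ c ha (show (0:ℕ) ≤ 1 by norm_num)
    rw [show 2 * a + 0 = 2 * a by ring] at this
    exact ⟨this.2, this.1⟩
  · subst h1
    have := pot_child' σ c ha (show (1:ℕ) ≤ 1 by norm_num)
    exact ⟨this.2, this.1⟩
  · subst h1
    have := pot_child' σ c hb (show (0:ℕ) ≤ 1 by norm_num)
    rw [show 2 * b + 0 = 2 * b by ring] at this
    exact this
  · subst h1
    exact pot_child' σ c hb (show (1:ℕ) ≤ 1 by norm_num)
  · rcases lt_or_gt_of_ne hne with hab | hab
    · rw [max_eq_right hab.le, min_eq_left hab.le] at hdiff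
      have := pot_horiz σ c hab hlog hd hdiff ha
      exact ⟨this.1, this.2⟩
    · rw [max_eq_left hab.le, min_eq_right hab.le] at hdiff
      rw [hlog] at hd hdiff
      have := pot_horiz σ c hab hlog.symm hd hdiff hb
      exact ⟨this.2, this.1⟩

lemma pot_walk (l σ c : ℕ) {u v : Fin (2 ^ l - 1)} (p : (hypertree l).Walk u v) :
    potF σ c (u.val + 1) - potF σ c (v.val + 1) ≤ 2 * (p.length : ℤ) ∧
    potF σ c (v.val + 1) - potF σ c (u.val + 1) ≤ 2 * (p.length : ℤ) := by
  induction p with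
  | nil => simp
  | @cons x y z h q ih =>
      have hadj : htAdjLbl (x.val + 1) (y.val + 1) := h
      have hb := pot_adj σ c (by omega) (by omega) hadj
      rw [SimpleGraph.Walk.length_cons]
      push_cast
      constructor <;> linarith [ih.1, ih.2, hb.1, hb.2]

lemma walk_to_root (l : ℕ) (h0 : 0 < 2 ^ l - 1) (z : Fin (2 ^ l - 1)) :
    ∃ p : (hypertree l).Walk ⟨0, h0⟩ z, p.length ≤ Nat.log 2 (z.val + 1) := by
  suffices H : ∀ m, ∀ z : Fin (2 ^ l - 1), z.val = m →
      ∃ p : (hypertree l).Walk ⟨0, h0⟩ z, p.length ≤ Nat.log 2 (z.val + 1) from H z.val z rfl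
  intro m
  induction m using Nat.strong_induction_on with
  | _ m ih =>
    intro z hz
    by_cases h : z.val = 0
    · have hz0 : z = ⟨0, h0⟩ := Fin.ext h
      subst hz0
      exact ⟨SimpleGraph.Walk.nil, by simp⟩
    · have hlt : (z.val + 1) / 2 - 1 < 2 ^ l - 1 := by
        have := z.isLt; omega
      set w : Fin (2 ^ l - 1) := ⟨(z.val + 1) / 2 - 1, hlt⟩ with hw
      have hwval : w.val = (z.val + 1) / 2 - 1 := rfl
      obtain ⟨p, hp⟩ := ih ((z.val + 1) / 2 - 1) (by omega) w rfl
      have hadj : (hypertree l).Adj w z := by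
        show htAdjLbl (w.val + 1) (z.val + 1)
        left
        omega
      refine ⟨p.concat hadj, ?_⟩
      rw [SimpleGraph.Walk.length_concat]
      have hlz : Nat.log 2 (z.val + 1) = Nat.log 2 ((z.val + 1) / 2) + 1 := by
        have h2 := log_child (a := (z.val + 1) / 2) (ε := (z.val + 1) % 2) (by omega) (by omega)
        rw [show 2 * ((z.val + 1) / 2) + (z.val + 1) % 2 = z.val + 1 by omega] at h2
        exact h2
      have hwv : w.val + 1 = (z.val + 1) / 2 := by omega
      rw [hwv] at hp
      omega

lemma pot_target_aux {l τ σ c : ℕ} (hl : 3 ≤ l)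
    (hτ1 : 2 ^ (l - 1) ≤ τ) (hτ2 : τ < 2 ^ l)
    (hsb : τ / 2 ^ (l - 2) % 2 = σ) (htb : τ / 2 ^ (l - 3) % 2 = c) :
    potF σ c τ = 2 * (l : ℤ) - 2 := by
  have h4 : 4 ≤ (2:ℕ) ^ (l - 1) := by
    calc (4:ℕ) = 2 ^ 2 := by norm_num
    _ ≤ 2 ^ (l - 1) := Nat.pow_le_pow_right (by norm_num) (by omega)
  have hlog : Nat.log 2 τ = l - 1 :=
    Nat.log_eq_of_pow_le_of_lt_pow hτ1 (by rw [show l - 1 + 1 = l by omega]; exact hτ2)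
  have hsb' : sbit τ = σ := by
    unfold sbit; rw [hlog, show l - 1 - 1 = l - 2 by omega]; exact hsb
  have htb' : tbit τ = c := by
    unfold tbit; rw [hlog, show l - 1 - 2 = l - 3 by omega]; exact htb
  unfold potF
  rw [if_neg (show ¬(τ ≤ 1) by omega), hlog, hsb', htb', if_pos rfl,
    if_pos ⟨by omega, rfl⟩]
  omega

lemma pot_target {l : ℕ} (σ c : ℕ) (hl : 3 ≤ l) (hσ : σ ≤ 1) (hc : c ≤ 1) :
    potF σ c (2 ^ (l - 1) + σ * 2 ^ (l - 2) + c * 2 ^ (l - 3)) = 2 * (l : ℤ) - 2 := by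
  have hE : 1 ≤ (2:ℕ) ^ (l - 3) := Nat.one_le_two_pow
  have e2 : (2:ℕ) ^ (l - 2) = 2 * 2 ^ (l - 3) := by
    rw [two_pow_pred (by omega : 1 ≤ l - 2), show l - 2 - 1 = l - 3 by omega]
  have e1 : (2:ℕ) ^ (l - 1) = 2 * 2 ^ (l - 2) := by
    rw [two_pow_pred (by omega : 1 ≤ l - 1), show l - 1 - 1 = l - 2 by omega]
  have e0 : (2:ℕ) ^ l = 2 * 2 ^ (l - 1) := by
    rw [two_pow_pred (by omega : 1 ≤ l)]
  interval_cases σ <;> interval_cases c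
  · have d1 : (2 ^ (l-1) + 0 * 2 ^ (l-2) + 0 * 2 ^ (l-3)) / 2 ^ (l - 2) = 2 :=
      Nat.div_eq_of_lt_le (by omega) (by omega)
    have d2 : (2 ^ (l-1) + 0 * 2 ^ (l-2) + 0 * 2 ^ (l-3)) / 2 ^ (l - 3) = 4 :=
      Nat.div_eq_of_lt_le (by omega) (by omega)
    exact pot_target_aux hl (by omega) (by omega) (by omega) (by omega)
  · have d1 : (2 ^ (l-1) + 0 * 2 ^ (l-2) + 1 * 2 ^ (l-3)) / 2 ^ (l - 2) = 2 :=
      Nat.div_eq_of_lt_le (by omega) (by omega)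
    have d2 : (2 ^ (l-1) + 0 * 2 ^ (l-2) + 1 * 2 ^ (l-3)) / 2 ^ (l - 3) = 5 :=
      Nat.div_eq_of_lt_le (by omega) (by omega)
    exact pot_target_aux hl (by omega) (by omega) (by omega) (by omega)
  · have d1 : (2 ^ (l-1) + 1 * 2 ^ (l-2) + 0 * 2 ^ (l-3)) / 2 ^ (l - 2) = 3 :=
      Nat.div_eq_of_lt_le (by omega) (by omega)
    have d2 : (2 ^ (l-1) + 1 * 2 ^ (l-2) + 0 * 2 ^ (l-3)) / 2 ^ (l - 3) = 6 :=
      Nat.div_eq_of_lt_le (by omega) (by omega)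
    exact pot_target_aux hl (by omega) (by omega) (by omega) (by omega)
  · have d1 : (2 ^ (l-1) + 1 * 2 ^ (l-2) + 1 * 2 ^ (l-3)) / 2 ^ (l - 2) = 3 :=
      Nat.div_eq_of_lt_le (by omega) (by omega)
    have d2 : (2 ^ (l-1) + 1 * 2 ^ (l-2) + 1 * 2 ^ (l-3)) / 2 ^ (l - 3) = 7 :=
      Nat.div_eq_of_lt_le (by omega) (by omega)
    exact pot_target_aux hl (by omega) (by omega) (by omega) (by omega)

lemma pot_start {a : ℕ} (ha : 1 ≤ a) : ∃ σ c : ℕ, σ ≤ 1 ∧ c ≤ 1 ∧ potF σ c a ≤ 0 := by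
  rcases eq_or_lt_of_le ha with h1 | h1
  · exact ⟨0, 0, by norm_num, by norm_num, by rw [← h1, pot_one]⟩
  · have hsb : sbit a ≤ 1 := by unfold sbit; omega
    have htb : tbit a ≤ 1 := by unfold tbit; omega
    have hlog := one_le_log (show 2 ≤ a by omega)
    refine ⟨1 - sbit a, 1 - tbit a, by omega, by omega, ?_⟩
    unfold potF
    rw [if_neg (show ¬(a ≤ 1) by omega), if_neg (show ¬(sbit a = 1 - sbit a) by omega),
      if_neg (show ¬(2 ≤ Nat.log 2 a ∧ tbit a = 1 - tbit a) by intro ⟨_, h⟩; omega)]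
    have : (1:ℤ) ≤ (Nat.log 2 a : ℤ) := by omega
    nlinarith

def gL (a : ℕ) : ℕ :=
  if a ≤ 1 then a
  else if a % 2 = 0 then a / 2 + 2 ^ Nat.log 2 (a / 2)
  else a / 2 + 2 ^ (Nat.log 2 (a / 2) + 1)

def hLf (b : ℕ) : ℕ :=
  if b ≤ 1 then b
  else if b < 2 ^ Nat.log 2 b + 2 ^ (Nat.log 2 b - 1) then 2 * (b - 2 ^ (Nat.log 2 b - 1))
  else 2 * (b - 2 ^ Nat.log 2 b) + 1

lemma gL_one : gL 1 = 1 := by simp [gL]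

lemma gL_even {y : ℕ} (hy : 1 ≤ y) : gL (2 * y) = y + 2 ^ Nat.log 2 y := by
  unfold gL
  rw [if_neg (show ¬(2 * y ≤ 1) by omega), if_pos (show 2 * y % 2 = 0 by omega),
    show 2 * y / 2 = y by omega]

lemma gL_odd {y : ℕ} (hy : 1 ≤ y) : gL (2 * y + 1) = y + 2 ^ (Nat.log 2 y + 1) := by
  unfold gL
  rw [if_neg (show ¬(2 * y + 1 ≤ 1) by omega), if_neg (show ¬((2 * y + 1) % 2 = 0) by omega),
    show (2 * y + 1) / 2 = y by omega]

lemma log_gL_even {y : ℕ} (hy : 1 ≤ y) :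
    Nat.log 2 (y + 2 ^ Nat.log 2 y) = Nat.log 2 y + 1 := by
  have p1 : 2 ^ Nat.log 2 y ≤ y := Nat.pow_log_le_self 2 (by omega)
  have p2 : y < 2 ^ (Nat.log 2 y + 1) := Nat.lt_pow_succ_log_self (by norm_num) y
  have hps : (2:ℕ) ^ (Nat.log 2 y + 1) = 2 * 2 ^ Nat.log 2 y := by rw [pow_succ]; ring
  have hpss : (2:ℕ) ^ (Nat.log 2 y + 1 + 1) = 4 * 2 ^ Nat.log 2 y := by
    rw [pow_succ, pow_succ]; ring
  exact Nat.log_eq_of_pow_le_of_lt_pow (by omega) (by omega)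

lemma log_gL_odd {y : ℕ} (hy : 1 ≤ y) :
    Nat.log 2 (y + 2 ^ (Nat.log 2 y + 1)) = Nat.log 2 y + 1 := by
  have p1 : 2 ^ Nat.log 2 y ≤ y := Nat.pow_log_le_self 2 (by omega)
  have p2 : y < 2 ^ (Nat.log 2 y + 1) := Nat.lt_pow_succ_log_self (by norm_num) y
  have hps : (2:ℕ) ^ (Nat.log 2 y + 1) = 2 * 2 ^ Nat.log 2 y := by rw [pow_succ]; ring
  have hpss : (2:ℕ) ^ (Nat.log 2 y + 1 + 1) = 4 * 2 ^ Nat.log 2 y := by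
    rw [pow_succ, pow_succ]; ring
  exact Nat.log_eq_of_pow_le_of_lt_pow (by omega) (by omega)

lemma hL_gL {a : ℕ} (ha : 1 ≤ a) : hLf (gL a) = a := by
  by_cases h1 : a ≤ 1
  · have : a = 1 := by omega
    subst this
    simp [gL, hLf]
  · have hy1 : 1 ≤ a / 2 := by omega
    set y := a / 2 with hy
    have p1 : 2 ^ Nat.log 2 y ≤ y := Nat.pow_log_le_self 2 (by omega)
    have p2 : y < 2 ^ (Nat.log 2 y + 1) := Nat.lt_pow_succ_log_self (by norm_num) y
    have hps : (2:ℕ) ^ (Nat.log 2 y + 1) = 2 * 2 ^ Nat.log 2 y := by rw [pow_succ]; ring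
    by_cases h2 : a % 2 = 0
    · rw [show a = 2 * y by omega, gL_even hy1]
      unfold hLf
      rw [if_neg (show ¬(y + 2 ^ Nat.log 2 y ≤ 1) by omega), log_gL_even hy1,
        Nat.add_sub_cancel, if_pos (by omega)]
      omega
    · rw [show a = 2 * y + 1 by omega, gL_odd hy1]
      unfold hLf
      rw [if_neg (show ¬(y + 2 ^ (Nat.log 2 y + 1) ≤ 1) by omega), log_gL_odd hy1,
        Nat.add_sub_cancel, if_neg (by omega)]
      omega

lemma gL_bounds {l a : ℕ} (hl : 3 ≤ l) (ha : 1 ≤ a) (ha2 : a ≤ 2 ^ l - 1) :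
    1 ≤ gL a ∧ gL a ≤ 2 ^ l - 1 := by
  have h8 : 8 ≤ (2:ℕ) ^ l := by
    calc (8:ℕ) = 2 ^ 3 := by norm_num
    _ ≤ 2 ^ l := Nat.pow_le_pow_right (by norm_num) hl
  have e0 : (2:ℕ) ^ l = 2 * 2 ^ (l - 1) := by
    rw [two_pow_pred (by omega : 1 ≤ l)]
  by_cases h1 : a ≤ 1
  · unfold gL; rw [if_pos h1]; omega
  · have hy1 : 1 ≤ a / 2 := by omega
    set y := a / 2 with hy
    have p1 : 2 ^ Nat.log 2 y ≤ y := Nat.pow_log_le_self 2 (by omega)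
    have hyl : y < 2 ^ (l - 1) := by omega
    have hel : Nat.log 2 y + 1 ≤ l - 1 := by
      have h3 : (2:ℕ) ^ Nat.log 2 y < 2 ^ (l - 1) := lt_of_le_of_lt p1 hyl
      have := (Nat.pow_lt_pow_iff_right (by norm_num : 1 < 2)).mp h3
      omega
    have h2e : (2:ℕ) ^ (Nat.log 2 y + 1) ≤ 2 ^ (l - 1) :=
      Nat.pow_le_pow_right (by norm_num) hel
    have hps : (2:ℕ) ^ (Nat.log 2 y + 1) = 2 * 2 ^ Nat.log 2 y := by rw [pow_succ]; ring
    by_cases h2 : a % 2 = 0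
    · rw [show a = 2 * y by omega, gL_even hy1]; omega
    · rw [show a = 2 * y + 1 by omega, gL_odd hy1]; omega

theorem dil_friendship_hypertree (l n k : ℕ) (hl : 3 ≤ l) (hn : n = 2 ^ l - 1)
    (hk : k = (n - 1) / 2) :
    (∀ f : Fin (2 * k + 1) ≃ Fin (2 ^ l - 1), ∃ u v : Fin (2 * k + 1),
      (friendshipGraph k).Adj u v ∧ l - 1 ≤ (hypertree l).dist (f u) (f v)) ∧
    (∃ f : Fin (2 * k + 1) ≃ Fin (2 ^ l - 1), ∀ u v : Fin (2 * k + 1),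
      (friendshipGraph k).Adj u v → (hypertree l).dist (f u) (f v) ≤ l - 1) := by
  have h8 : 8 ≤ (2:ℕ) ^ l := by
    calc (8:ℕ) = 2 ^ 3 := by norm_num
    _ ≤ 2 ^ l := Nat.pow_le_pow_right (by norm_num) hl
  have e0 : (2:ℕ) ^ l = 2 * 2 ^ (l - 1) := two_pow_pred (by omega)
  have e1 : (2:ℕ) ^ (l - 1) = 2 * 2 ^ (l - 2) := by
    rw [two_pow_pred (by omega : 1 ≤ l - 1), show l - 1 - 1 = l - 2 by omega]
  have e2 : (2:ℕ) ^ (l - 2) = 2 * 2 ^ (l - 3) := by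
    rw [two_pow_pred (by omega : 1 ≤ l - 2), show l - 2 - 1 = l - 3 by omega]
  have hE : 1 ≤ (2:ℕ) ^ (l - 3) := Nat.one_le_two_pow
  have hnk : 2 * k + 1 = 2 ^ l - 1 := by omega
  have h0 : 0 < 2 ^ l - 1 := by omega
  have hzval : (0 : Fin (2 * k + 1)).val = 0 := rfl
  constructor
  · intro f
    obtain ⟨σ, c, hσ, hc, hw⟩ := pot_start (a := (f 0).val + 1) (by omega)
    have hA : σ * 2 ^ (l - 2) ≤ 2 ^ (l - 2) := by
      calc σ * 2 ^ (l - 2) ≤ 1 * 2 ^ (l - 2) := Nat.mul_le_mul_right _ hσ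
      _ = 2 ^ (l - 2) := one_mul _
    have hB : c * 2 ^ (l - 3) ≤ 2 ^ (l - 3) := by
      calc c * 2 ^ (l - 3) ≤ 1 * 2 ^ (l - 3) := Nat.mul_le_mul_right _ hc
      _ = 2 ^ (l - 3) := one_mul _
    set τ := 2 ^ (l - 1) + σ * 2 ^ (l - 2) + c * 2 ^ (l - 3) with hτdef
    have hτ1 : 2 ^ (l - 1) ≤ τ := le_trans (Nat.le_add_right _ _) (Nat.le_add_right _ _)
    have hτ2 : τ < 2 ^ l := by
      have : τ ≤ 2 ^ (l - 1) + 2 ^ (l - 2) + 2 ^ (l - 3) :=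
        Nat.add_le_add (Nat.add_le_add le_rfl hA) hB
      omega
    have htpot : potF σ c τ = 2 * (l : ℤ) - 2 := pot_target σ c hl hσ hc
    set t : Fin (2 ^ l - 1) := ⟨τ - 1, by omega⟩ with htdef
    have htval : t.val + 1 = τ := by
      show τ - 1 + 1 = τ
      omega
    refine ⟨0, f.symm t, ⟨?_, Or.inl hzval⟩, ?_⟩
    · intro heq
      have hft : f 0 = t := by rw [heq, Equiv.apply_symm_apply]
      rw [hft, htval, htpot] at hw
      omega
    · rw [Equiv.apply_symm_apply]
      obtain ⟨pw, -⟩ := walk_to_root l h0 (f 0)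
      obtain ⟨pt, -⟩ := walk_to_root l h0 t
      obtain ⟨q, hq⟩ := (pw.reachable.symm.trans pt.reachable).exists_walk_length_eq_dist
      have hpw := (pot_walk l σ c q).2
      rw [htval, htpot] at hpw
      omega
  · have hFb : ∀ x : Fin (2 * k + 1), 1 ≤ gL (x.val + 1) ∧ gL (x.val + 1) ≤ 2 ^ l - 1 := by
      intro x
      exact gL_bounds hl (by omega) (by have := x.isLt; omega)
    set F : Fin (2 * k + 1) → Fin (2 ^ l - 1) :=
      fun x => ⟨gL (x.val + 1) - 1, by have := hFb x; omega⟩ with hFdef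
    have hFval : ∀ x : Fin (2 * k + 1), (F x).val + 1 = gL (x.val + 1) := by
      intro x
      have := hFb x
      show gL (x.val + 1) - 1 + 1 = gL (x.val + 1)
      omega
    have hinj : Function.Injective F := by
      intro x y hxy
      have hbx := hFb x
      have hby := hFb y
      have h1 : gL (x.val + 1) - 1 = gL (y.val + 1) - 1 := congrArg Fin.val hxy
      have hgeq : gL (x.val + 1) = gL (y.val + 1) := by omega
      have h2 := congrArg hLf hgeq
      rw [hL_gL (by omega), hL_gL (by omega)] at h2
      exact Fin.ext (by omega)
    have hbij : Function.Bijective F :=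
      (Fintype.bijective_iff_injective_and_card F).mpr ⟨hinj, by simp [hnk]⟩
    refine ⟨Equiv.ofBijective F hbij, ?_⟩
    have hroot : ∀ z : Fin (2 ^ l - 1), (hypertree l).dist ⟨0, h0⟩ z ≤ l - 1 := by
      intro z
      obtain ⟨p, hp⟩ := walk_to_root l h0 z
      have hzlog : Nat.log 2 (z.val + 1) ≤ l - 1 := by
        have := Nat.log_lt_of_lt_pow (show z.val + 1 ≠ 0 by omega)
          (show z.val + 1 < 2 ^ l by have := z.isLt; omega)
        omega
      exact le_trans (SimpleGraph.dist_le p) (le_trans hp hzlog)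
    have hzero : ∀ x : Fin (2 * k + 1), x.val = 0 → F x = ⟨0, h0⟩ := by
      intro x hx
      apply Fin.ext
      show gL (x.val + 1) - 1 = 0
      rw [hx]
      norm_num [gL_one]
    have hpair : ∀ x x' : Fin (2 * k + 1), x'.val = x.val + 1 → x.val % 2 = 1 →
        (hypertree l).Adj (F x) (F x') := by
      intro x x' hx1 hx2
      have hy1 : 1 ≤ (x.val + 1) / 2 := by omega
      set y := (x.val + 1) / 2 with hy
      have hax : x.val + 1 = 2 * y := by omega
      have hax' : x'.val + 1 = 2 * y + 1 := by omega
      show htAdjLbl ((F x).val + 1) ((F x').val + 1)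
      rw [hFval, hFval, hax, hax', gL_even hy1, gL_odd hy1]
      right
      have hps : (2:ℕ) ^ (Nat.log 2 y + 1) = 2 * 2 ^ Nat.log 2 y := by rw [pow_succ]; ring
      have hE2 : 1 ≤ (2:ℕ) ^ Nat.log 2 y := Nat.one_le_two_pow
      refine ⟨by omega, ?_, ?_, ?_⟩
      · rw [log_gL_even hy1, log_gL_odd hy1]
      · rw [log_gL_even hy1]; omega
      · rw [log_gL_even hy1, Nat.add_sub_cancel,
          max_eq_right (by omega : y + 2 ^ Nat.log 2 y ≤ y + 2 ^ (Nat.log 2 y + 1)),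
          min_eq_left (by omega : y + 2 ^ Nat.log 2 y ≤ y + 2 ^ (Nat.log 2 y + 1))]
        omega
    rintro u v ⟨hne, hcase⟩
    show (hypertree l).dist (F u) (F v) ≤ l - 1
    rcases hcase with hu | hv | hp | hp
    · rw [hzero u hu]
      exact hroot _
    · rw [SimpleGraph.dist_comm, hzero v hv]
      exact hroot _
    · have hadj := hpair u v hp.1 hp.2
      have hd1 : (hypertree l).dist (F u) (F v) ≤ 1 := by
        simpa using SimpleGraph.dist_le (SimpleGraph.Walk.cons hadj SimpleGraph.Walk.nil)
      omega
    · have hadj := hpair v u hp.1 hp.2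
      have hd1 : (hypertree l).dist (F u) (F v) ≤ 1 := by
        rw [SimpleGraph.dist_comm]
        simpa using SimpleGraph.dist_le (SimpleGraph.Walk.cons hadj SimpleGraph.Walk.nil)
      omega
end

section
/- Let n ≥ 4. Then EC(WM_{2^{n−1}}, G(2^n; ±{1, 2^{n−2}})) = 2^{n−2}: there exists an embedding with routing of the windmill graph WM_{2^{n−1}} (on 2^n vertices) into the circulant graph G(2^n; ±{1, 2^{n−2}}) whose maximum edge congestion is exactly 2^{n−2}, and every embedding with routing has some edge of congestion at least 2^{n−2}. -/
open SimpleGraph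

/-- Windmill graph `WM_k` on `Fin (2k)`: the friendship graph `T_k` with one
degree-two vertex deleted; hub `0`, triangles `(0,1,2), …, (0,2k-3,2k-2)` and
pendant vertex `2k-1`. -/
def windmillGraph (k : ℕ) : SimpleGraph (Fin (2 * k)) where
  Adj x y := x ≠ y ∧ (x.val = 0 ∨ y.val = 0 ∨
    (y.val = x.val + 1 ∧ x.val % 2 = 1) ∨ (x.val = y.val + 1 ∧ y.val % 2 = 1))
  symm := by constructor; rintro x y ⟨h1, h2⟩; exact ⟨h1.symm, by tauto⟩
  loopless := by constructor; rintro x ⟨h1, -⟩; exact h1 rfl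

/-- The circulant graph `G(m; ±S)` on `ZMod m`: `i` and `j` are adjacent iff
`(i - j) mod m ∈ S` or `(j - i) mod m ∈ S`. -/
def circulantG (m : ℕ) (S : Set ℕ) : SimpleGraph (ZMod m) where
  Adj i j := i ≠ j ∧ ((i - j).val ∈ S ∨ (j - i).val ∈ S)
  symm := by constructor; rintro i j ⟨h1, h2⟩; exact ⟨h1.symm, h2.symm⟩
  loopless := by constructor; rintro i ⟨h1, -⟩; exact h1 rfl

/-- An embedding with routing: a bijection on vertices together with, for each edge
of the guest graph, a path in the host graph between the images of its endpoints
(routing an edge in either direction uses the same path, reversed). -/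
structure RoutedEmbedding {V W : Type*} (G : SimpleGraph V) (H : SimpleGraph W) where
  toEquiv : V ≃ W
  route : ∀ u v, G.Adj u v → H.Walk (toEquiv u) (toEquiv v)
  route_isPath : ∀ u v (h : G.Adj u v), (route u v h).IsPath
  route_symm : ∀ u v (h : G.Adj u v), route v u h.symm = (route u v h).reverse

/-- The congestion of an edge `e` of the host graph: the number of guest edges whose
routing path passes through `e`. -/
noncomputable def congestion {V W : Type*} (G : SimpleGraph V) (H : SimpleGraph W)
    (R : RoutedEmbedding G H) (e : Sym2 W) : ℕ :=
  {d : Sym2 V | d ∈ G.edgeSet ∧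
    ∃ u v, ∃ h : G.Adj u v, d = s(u, v) ∧ e ∈ (R.route u v h).edges}.ncard

namespace WMCG

variable {c : ℕ}

local notation "m" => 2*(2*c)
abbrev HG (c : ℕ) : SimpleGraph (ZMod (2*(2*c))) := circulantG (2*(2*c)) {1, c}

lemma cast_inj_of_lt (h : 4 ≤ c) {x y : ℕ} (hx : x < m) (hy : y < m) (hxy : (x : ZMod m) = y) :
    x = y := by
  have h1 := ZMod.val_cast_of_lt hx
  have h2 := ZMod.val_cast_of_lt hy
  rw [hxy] at h1; omega

lemma cast_ne_zero (h : 4 ≤ c) {x : ℕ} (h1 : 0 < x) (h2 : x < m) : (x : ZMod m) ≠ 0 := by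
  intro hx
  have := cast_inj_of_lt h h2 (by omega : 0 < m) (by simpa using hx)
  omega

lemma adj_step (h : 4 ≤ c) (a : ℕ) : (HG c).Adj ↑a ↑(a+1) := by
  constructor
  · intro heq
    have : ((1:ℕ) : ZMod m) = 0 := by push_cast at heq ⊢; linear_combination -heq
    exact cast_ne_zero h (by omega) (by omega) this
  · right
    have : ((a+1 : ℕ) : ZMod m) - ↑a = ((1:ℕ) : ZMod m) := by push_cast; ring
    rw [this, ZMod.val_cast_of_lt (by omega : 1 < m)]
    left; rfl

lemma adj_chord (h : 4 ≤ c) (a : ℕ) : (HG c).Adj ↑a ↑(a+c) := by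
  constructor
  · intro heq
    have : ((c:ℕ) : ZMod m) = 0 := by push_cast at heq ⊢; linear_combination -heq
    exact cast_ne_zero h (by omega) (by omega) this
  · right
    have : ((a+c : ℕ) : ZMod m) - ↑a = ((c:ℕ) : ZMod m) := by push_cast; ring
    rw [this, ZMod.val_cast_of_lt (by omega : c < m)]
    right; rfl

def ascWalk (h : 4 ≤ c) (a : ℕ) : (L : ℕ) → (HG c).Walk (↑a) (↑(a + L))
  | 0 => Walk.nil
  | L+1 => Walk.cons (adj_step h a) ((ascWalk h (a+1) L).copy rfl (by congr 1; omega))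

lemma ascWalk_edges (h : 4 ≤ c) (a L : ℕ) :
    (ascWalk h a L).edges = (List.range L).map (fun i => s((↑(a+i) : ZMod m), ↑(a+i+1))) := by
  induction L generalizing a with
  | zero => rfl
  | succ L ih =>
    rw [ascWalk, Walk.edges_cons, Walk.edges_copy, ih, List.range_succ_eq_map, List.map_cons,
      List.map_map]
    refine congrArg₂ List.cons rfl ?_
    apply List.map_congr_left
    intro i _
    have e1 : a + 1 + i = a + (i+1) := by omega
    have e2 : a + 1 + i + 1 = a + (i+1) + 1 := by omega
    simp only [Function.comp_apply, Nat.succ_eq_add_one, e1, e2]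

lemma ascWalk_support (h : 4 ≤ c) (a L : ℕ) :
    (ascWalk h a L).support = (List.range (L+1)).map (fun i => ((↑(a+i)) : ZMod m)) := by
  induction L generalizing a with
  | zero => rfl
  | succ L ih =>
    rw [ascWalk, Walk.support_cons, Walk.support_copy, ih, List.range_succ_eq_map (n := L+1),
      List.map_cons, List.map_map]
    refine congrArg₂ List.cons rfl ?_
    apply List.map_congr_left
    intro i _
    have e1 : a + 1 + i = a + (i+1) := by omega
    simp only [Function.comp_apply, Nat.succ_eq_add_one, e1]

lemma ascWalk_isPath (h : 4 ≤ c) {a L : ℕ} (h1 : a + L ≤ m) (h2 : 0 < a ∨ a + L < m) :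
    (ascWalk h a L).IsPath := by
  rw [Walk.isPath_def, ascWalk_support]
  refine List.Nodup.map_on ?_ List.nodup_range
  intro x hx y hy hxy
  rw [List.mem_range] at hx hy
  -- values a+x, a+y ≤ a+L ≤ m ; at most one equals m, and only if a > 0
  rcases Nat.lt_or_ge (a+x) m with hax | hax
  · rcases Nat.lt_or_ge (a+y) m with hay | hay
    · have := cast_inj_of_lt h hax hay hxy; omega
    · have hym : a + y = m := by omega
      exfalso
      have : ((a+y:ℕ) : ZMod m) = 0 := by rw [hym]; exact_mod_cast ZMod.natCast_self _
      rw [this] at hxy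
      exact cast_ne_zero h (by omega) hax hxy
  · have hxm : a + x = m := by omega
    rcases Nat.lt_or_ge (a+y) m with hay | hay
    · exfalso
      have : ((a+x:ℕ) : ZMod m) = 0 := by rw [hxm]; exact_mod_cast ZMod.natCast_self _
      rw [this] at hxy
      exact cast_ne_zero h (by omega) hay hxy.symm
    · omega


lemma eqA (h : 4 ≤ c) {a b : ℕ} (ha : a < m) (hb : b < m)
    (hab : s((a : ZMod m), (↑(a+1) : ZMod m)) = s((b : ZMod m), ↑(b+1))) : a = b := by
  rw [Sym2.eq_iff] at hab
  rcases hab with ⟨h1, _⟩ | ⟨h1, h2⟩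
  · exact cast_inj_of_lt h ha hb h1
  · exfalso
    have : ((2:ℕ) : ZMod m) = 0 := by push_cast at h1 h2 ⊢; linear_combination h2 - h1
    exact cast_ne_zero h (by omega) (by omega) this

lemma eqB (h : 4 ≤ c) {a b : ℕ} :
    s((a : ZMod m), (↑(a+1) : ZMod m)) ≠ s((b : ZMod m), ↑(b+c)) := by
  intro hab
  rw [Sym2.eq_iff] at hab
  rcases hab with ⟨h1, h2⟩ | ⟨h1, h2⟩
  · have : ((c:ℕ) : ZMod m) = ((1:ℕ) : ZMod m) := by
      push_cast at h1 h2 ⊢; linear_combination h1 - h2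
    have := cast_inj_of_lt h (by omega : c < m) (by omega : 1 < m) this
    omega
  · have : ((c+1:ℕ) : ZMod m) = 0 := by push_cast at h1 h2 ⊢; linear_combination h2 - h1
    exact cast_ne_zero h (by omega) (by omega) this

lemma eqC (h : 4 ≤ c) {a b : ℕ} (ha : a < m) (hb : b < m)
    (hab : s((a : ZMod m), (↑(a+c) : ZMod m)) = s((b : ZMod m), ↑(b+c))) : a = b := by
  rw [Sym2.eq_iff] at hab
  rcases hab with ⟨h1, _⟩ | ⟨h1, h2⟩
  · exact cast_inj_of_lt h ha hb h1
  · exfalso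
    have : ((2*c:ℕ) : ZMod m) = 0 := by push_cast at h1 h2 ⊢; linear_combination h2 - h1
    exact cast_ne_zero h (by omega) (by omega) this

lemma cast_m_eq_zero (h : 4 ≤ c) {x : ℕ} (hx : x = 2*(2*c)) : ((x:ℕ) : ZMod m) = 0 := by
  rw [hx]; exact_mod_cast ZMod.natCast_self _

def hubWalk (h : 4 ≤ c) (j : ℕ) (hj : j < 4*c) : (HG c).Walk 0 ↑j :=
  if h1 : j ≤ c then
    (ascWalk h 0 j).copy (by norm_num) (by congr 1; omega)
  else if h2 : j ≤ 2*c then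
    Walk.cons (by simpa using adj_chord h 0) ((ascWalk h c (j-c)).copy rfl (by congr 1; omega))
  else if h3 : j ≤ 3*c - 1 then
    Walk.cons
      (by
        have h2 := ((adj_chord h (3*c)).symm)
        rwa [cast_m_eq_zero h (by omega : 3*c+c = 2*(2*c))] at h2)
      ((ascWalk h j (3*c-j)).copy rfl (by congr 1; omega)).reverse
  else
    ((ascWalk h j (4*c-j)).copy rfl (cast_m_eq_zero h (by omega))).reverse

lemma hubWalk_isPath (h : 4 ≤ c) (j : ℕ) (hj : j < 4*c) : (hubWalk h j hj).IsPath := by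
  unfold hubWalk
  split_ifs with h1 h2 h3
  · rw [Walk.isPath_copy]
    exact ascWalk_isPath h (by omega) (by omega)
  · rw [Walk.cons_isPath_iff]
    constructor
    · rw [Walk.isPath_copy]
      exact ascWalk_isPath h (by omega) (by omega)
    · rw [Walk.support_copy, ascWalk_support]
      intro hmem
      rw [List.mem_map] at hmem
      obtain ⟨i, hi, hcast⟩ := hmem
      rw [List.mem_range] at hi
      exact cast_ne_zero h (by omega) (by omega) hcast
  · rw [Walk.cons_isPath_iff]
    constructor
    · rw [Walk.isPath_reverse_iff, Walk.isPath_copy]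
      exact ascWalk_isPath h (by omega) (by omega)
    · rw [Walk.support_reverse, List.mem_reverse, Walk.support_copy, ascWalk_support]
      intro hmem
      rw [List.mem_map] at hmem
      obtain ⟨i, hi, hcast⟩ := hmem
      rw [List.mem_range] at hi
      exact cast_ne_zero h (by omega) (by omega) hcast
  · rw [Walk.isPath_reverse_iff, Walk.isPath_copy]
    exact ascWalk_isPath h (by omega) (by omega)

def bladeWalk (h : 4 ≤ c) (x : ℕ) : (HG c).Walk ↑x ↑(x+1) :=
  Walk.cons (adj_step h x) Walk.nil

lemma bladeWalk_edges (h : 4 ≤ c) (x : ℕ) :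
    (bladeWalk h x).edges = [s((x : ZMod m), ↑(x+1))] := rfl

lemma bladeWalk_isPath (h : 4 ≤ c) {x : ℕ} (hx : x + 1 < m) : (bladeWalk h x).IsPath := by
  rw [Walk.isPath_def]
  simp only [bladeWalk, Walk.support_cons, Walk.support_nil]
  refine List.nodup_cons.mpr ⟨?_, List.nodup_singleton _⟩
  simp only [List.mem_singleton]
  intro hc
  have := cast_inj_of_lt h (by omega) (by omega) hc
  omega

lemma mem_hub_cycle (h : 4 ≤ c) {a j : ℕ} (ha : a < 4*c) {hj : j < 4*c}
    (he : s((a : ZMod m), (↑(a+1) : ZMod m)) ∈ (hubWalk h j hj).edges) :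
    (a < c ∧ a < j ∧ j ≤ c) ∨ (c ≤ a ∧ a < 2*c ∧ a < j ∧ j ≤ 2*c) ∨
    (2*c ≤ a ∧ a < 3*c ∧ 2*c < j ∧ j ≤ a) ∨ (3*c ≤ a ∧ 3*c ≤ j ∧ j ≤ a) := by
  unfold hubWalk at he
  split_ifs at he with h1 h2 h3
  · rw [Walk.edges_copy, ascWalk_edges] at he
    rw [List.mem_map] at he
    obtain ⟨i, hi, hcast⟩ := he
    rw [List.mem_range] at hi
    have := eqA h (by omega) (by omega) hcast.symm
    omega
  · rw [Walk.edges_cons, List.mem_cons, Walk.edges_copy, ascWalk_edges] at he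
    rcases he with he | he
    · exfalso
      have h0 : ((0:ℕ) : ZMod m) = 0 := by norm_num
      rw [← h0, show ((c:ℕ) : ZMod m) = ((0+c : ℕ) : ZMod m) by norm_num] at he
      exact eqB h he
    · rw [List.mem_map] at he
      obtain ⟨i, hi, hcast⟩ := he
      rw [List.mem_range] at hi
      have := eqA h (by omega) (by omega) hcast.symm
      omega
  · rw [Walk.edges_cons, List.mem_cons, Walk.edges_reverse, List.mem_reverse,
      Walk.edges_copy, ascWalk_edges] at he
    rcases he with he | he
    · exfalso
      rw [show ((0:ZMod m)) = ((3*c+c : ℕ) : ZMod m) from (cast_m_eq_zero h (by omega)).symm,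
        @Sym2.eq_swap _ (((3*c+c : ℕ)) : ZMod m) (((3*c : ℕ)) : ZMod m)] at he
      exact eqB h he
    · rw [List.mem_map] at he
      obtain ⟨i, hi, hcast⟩ := he
      rw [List.mem_range] at hi
      have := eqA h (by omega) (by omega) hcast.symm
      omega
  · rw [Walk.edges_reverse, List.mem_reverse, Walk.edges_copy, ascWalk_edges] at he
    rw [List.mem_map] at he
    obtain ⟨i, hi, hcast⟩ := he
    rw [List.mem_range] at hi
    have := eqA h (by omega) (by omega) hcast.symm
    omega

lemma mem_hub_chord (h : 4 ≤ c) {a j : ℕ} (ha : a < 4*c) {hj : j < 4*c}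
    (he : s((a : ZMod m), (↑(a+c) : ZMod m)) ∈ (hubWalk h j hj).edges) :
    (a = 0 ∧ c < j ∧ j ≤ 2*c) ∨ (a = 3*c ∧ 2*c < j ∧ j ≤ 3*c - 1) := by
  unfold hubWalk at he
  split_ifs at he with h1 h2 h3
  · rw [Walk.edges_copy, ascWalk_edges, List.mem_map] at he
    obtain ⟨i, _, hcast⟩ := he
    exact (eqB h hcast).elim
  · rw [Walk.edges_cons, List.mem_cons, Walk.edges_copy, ascWalk_edges] at he
    rcases he with he | he
    · left
      have h0 : ((0:ℕ) : ZMod m) = 0 := by norm_num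
      rw [← h0, show ((c:ZMod m)) = ((0+c : ℕ) : ZMod m) by norm_num] at he
      have := eqC h (by omega) (by omega) he
      omega
    · rw [List.mem_map] at he
      obtain ⟨i, _, hcast⟩ := he
      exact (eqB h hcast).elim
  · rw [Walk.edges_cons, List.mem_cons, Walk.edges_reverse, List.mem_reverse,
      Walk.edges_copy, ascWalk_edges] at he
    rcases he with he | he
    · right
      rw [show ((0:ZMod m)) = ((3*c+c : ℕ) : ZMod m) from (cast_m_eq_zero h (by omega)).symm,
        @Sym2.eq_swap _ (((3*c+c : ℕ)) : ZMod m) (((3*c : ℕ)) : ZMod m)] at he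
      have := eqC h (by omega) (by omega) he
      omega
    · rw [List.mem_map] at he
      obtain ⟨i, _, hcast⟩ := he
      exact (eqB h hcast).elim
  · rw [Walk.edges_reverse, List.mem_reverse, Walk.edges_copy, ascWalk_edges, List.mem_map] at he
    obtain ⟨i, _, hcast⟩ := he
    exact (eqB h hcast).elim


def ι (h : 4 ≤ c) : Fin (2*(2*c)) ≃ ZMod (2*(2*c)) where
  toFun i := (i.val : ZMod m)
  invFun x := ⟨x.val, by
    haveI : NeZero (2*(2*c)) := ⟨by omega⟩
    exact x.val_lt⟩
  left_inv i := by
    apply Fin.ext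
    simp [ZMod.val_cast_of_lt i.isLt]
  right_inv x := by
    haveI : NeZero (2*(2*c)) := ⟨by omega⟩
    exact ZMod.natCast_rightInverse x

abbrev WM (c : ℕ) := windmillGraph (2*c)

def hubF (h : 4 ≤ c) : Fin (2*(2*c)) := ⟨0, by omega⟩

lemma wm_adj {u v : Fin (2*(2*c))} (hadj : (WM c).Adj u v) :
    u ≠ v ∧ (u.val = 0 ∨ v.val = 0 ∨
      (v.val = u.val + 1 ∧ u.val % 2 = 1) ∨ (u.val = v.val + 1 ∧ v.val % 2 = 1)) := hadj

def route (h : 4 ≤ c) (u v : Fin (2*(2*c))) (hadj : (WM c).Adj u v) :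
    (HG c).Walk ((ι h) u) ((ι h) v) :=
  if hu : u.val = 0 then
    (hubWalk h v.val (by have := v.isLt; omega)).copy (by simp only [ι, Equiv.coe_fn_mk, hu, Nat.cast_zero]) (show ((v.val : ℕ) : ZMod m) = (ι h) v from rfl)
  else if hv : v.val = 0 then
    ((hubWalk h u.val (by have := u.isLt; omega)).copy (by simp only [ι, Equiv.coe_fn_mk, hv, Nat.cast_zero]) (show ((u.val : ℕ) : ZMod m) = (ι h) u from rfl)).reverse
  else if hw : v.val = u.val + 1 then
    (bladeWalk h u.val).copy (show ((u.val : ℕ) : ZMod m) = (ι h) u from rfl) (by rw [← hw]; exact rfl)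
  else
    ((bladeWalk h v.val).copy (show ((v.val : ℕ) : ZMod m) = (ι h) v from rfl)
      (by
        have h2 := (wm_adj hadj).2
        have : u.val = v.val + 1 := by omega
        rw [← this]; exact rfl)).reverse

lemma route_isPath (h : 4 ≤ c) (u v : Fin (2*(2*c))) (hadj : (WM c).Adj u v) :
    (route h u v hadj).IsPath := by
  have hne : u.val ≠ v.val := fun hval => (wm_adj hadj).1 (Fin.ext hval)
  unfold route
  split_ifs with hu hv hw
  · rw [Walk.isPath_copy]; exact hubWalk_isPath h _ _
  · rw [Walk.isPath_reverse_iff, Walk.isPath_copy]; exact hubWalk_isPath h _ _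
  · rw [Walk.isPath_copy]
    exact bladeWalk_isPath h (by have := v.isLt; omega)
  · rw [Walk.isPath_reverse_iff, Walk.isPath_copy]
    have h2 := (wm_adj hadj).2
    exact bladeWalk_isPath h (by have := u.isLt; omega)

lemma route_symm (h : 4 ≤ c) (u v : Fin (2*(2*c))) (hadj : (WM c).Adj u v) :
    route h v u hadj.symm = (route h u v hadj).reverse := by
  have hne : u.val ≠ v.val := fun hval => (wm_adj hadj).1 (Fin.ext hval)
  have h2 := (wm_adj hadj).2
  unfold route
  by_cases hu : u.val = 0
  · rw [dif_pos hu, dif_neg (by omega : ¬ v.val = 0), dif_pos hu]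
  · rw [dif_neg hu]
    by_cases hv : v.val = 0
    · rw [dif_pos hv, dif_pos hv, Walk.reverse_reverse]
    · rw [dif_neg hv, dif_neg hv, dif_neg hu]
      by_cases hw : v.val = u.val + 1
      · rw [dif_pos hw, dif_neg (by omega : ¬ u.val = v.val + 1)]
      · rw [dif_neg hw, dif_pos (by omega : u.val = v.val + 1), Walk.reverse_reverse]


lemma vlt (v : Fin (2*(2*c))) : v.val < 4*c := by have := v.isLt; omega

lemma sub_val_eq (h : 4 ≤ c) {x y : ZMod m} {k : ℕ} (hv : (x - y).val = k) : x = y + ↑k := by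
  haveI : NeZero (2*(2*c)) := ⟨by omega⟩
  have h2 : ((ZMod.val (x - y) : ℕ) : ZMod m) = x - y := ZMod.natCast_rightInverse _
  rw [hv] at h2
  linear_combination -h2

lemma edge_form (h : 4 ≤ c) {e : Sym2 (ZMod (2*(2*c)))} (he : e ∈ (HG c).edgeSet) :
    ∃ a : ℕ, a < m ∧ (e = s((a : ZMod m), ↑(a+1)) ∨ e = s((a : ZMod m), ↑(a+c))) := by
  haveI : NeZero (2*(2*c)) := ⟨by omega⟩
  induction e using Sym2.ind with
  | _ x y =>
    rw [mem_edgeSet] at he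
    obtain ⟨hne, hd⟩ := he
    simp only [Set.mem_insert_iff, Set.mem_singleton_iff] at hd
    have hx : ((x.val : ℕ) : ZMod m) = x := ZMod.natCast_rightInverse _
    have hy : ((y.val : ℕ) : ZMod m) = y := ZMod.natCast_rightInverse _
    rcases hd with (hd | hd) | (hd | hd)
    · refine ⟨y.val, y.val_lt, Or.inl ?_⟩
      have := sub_val_eq h hd
      have hxx : x = ((y.val + 1 : ℕ) : ZMod m) := by
        push_cast; rw [hy]; exact_mod_cast this
      rw [show ((y.val : ℕ) : ZMod m) = y from hy, ← hxx]
      exact Sym2.eq_swap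
    · refine ⟨y.val, y.val_lt, Or.inr ?_⟩
      have := sub_val_eq h hd
      have hxx : x = ((y.val + c : ℕ) : ZMod m) := by
        push_cast; rw [hy]; exact_mod_cast this
      rw [show ((y.val : ℕ) : ZMod m) = y from hy, ← hxx]
      exact Sym2.eq_swap
    · refine ⟨x.val, x.val_lt, Or.inl ?_⟩
      have := sub_val_eq h hd
      have hxx : y = ((x.val + 1 : ℕ) : ZMod m) := by
        push_cast; rw [hx]; exact_mod_cast this
      rw [show ((x.val : ℕ) : ZMod m) = x from hx, ← hxx]
    · refine ⟨x.val, x.val_lt, Or.inr ?_⟩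
      have := sub_val_eq h hd
      have hxx : y = ((x.val + c : ℕ) : ZMod m) := by
        push_cast; rw [hx]; exact_mod_cast this
      rw [show ((x.val : ℕ) : ZMod m) = x from hx, ← hxx]

def Icyc (c a : ℕ) : Finset ℕ :=
  if a < c then Finset.Ioc a c
  else if a < 2*c then Finset.Ioc a (2*c)
  else if a < 3*c then Finset.Ioc (2*c) a
  else Finset.Icc (3*c) a

lemma mem_Icyc (h : 4 ≤ c) {a j : ℕ}
    (hcases : (a < c ∧ a < j ∧ j ≤ c) ∨ (c ≤ a ∧ a < 2*c ∧ a < j ∧ j ≤ 2*c) ∨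
      (2*c ≤ a ∧ a < 3*c ∧ 2*c < j ∧ j ≤ a) ∨ (3*c ≤ a ∧ 3*c ≤ j ∧ j ≤ a)) :
    j ∈ Icyc c a := by
  unfold Icyc
  split_ifs <;> simp only [Finset.mem_Ioc, Finset.mem_Icc] <;> omega

lemma card_Icyc_le (h : 4 ≤ c) {a : ℕ} (ha : a < 4*c) : (Icyc c a).card ≤ c := by
  unfold Icyc
  split_ifs <;> simp only [Nat.card_Ioc, Nat.card_Icc] <;> omega

lemma card_Icyc_le_of_odd (h : 4 ≤ c) (heven : c % 2 = 0) {a : ℕ}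
    (hodd : a % 2 = 1) (ha : a + 3 ≤ 4*c) : (Icyc c a).card ≤ c - 1 := by
  unfold Icyc
  split_ifs <;> simp only [Nat.card_Ioc, Nat.card_Icc] <;> omega

def Ichd (c a : ℕ) : Finset ℕ :=
  if a = 0 then Finset.Ioc c (2*c)
  else if a = 3*c then Finset.Ioc (2*c) (3*c-1)
  else ∅

lemma mem_Ichd (h : 4 ≤ c) {a j : ℕ}
    (hcases : (a = 0 ∧ c < j ∧ j ≤ 2*c) ∨ (a = 3*c ∧ 2*c < j ∧ j ≤ 3*c - 1)) :
    j ∈ Ichd c a := by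
  unfold Ichd
  split_ifs <;> simp only [Finset.mem_Ioc, Finset.notMem_empty] <;> omega

lemma card_Ichd_le (h : 4 ≤ c) (a : ℕ) : (Ichd c a).card ≤ c := by
  unfold Ichd
  split_ifs <;> simp only [Nat.card_Ioc, Finset.card_empty] <;> omega

def finm (h : 4 ≤ c) (j : ℕ) : Fin (2*(2*c)) := ⟨j % (2*(2*c)), Nat.mod_lt _ (by omega)⟩

lemma finm_val (h : 4 ≤ c) {j : ℕ} (hj : j < m) : (finm h j).val = j := Nat.mod_eq_of_lt hj

lemma route_cases (h : 4 ≤ c) (u v : Fin (2*(2*c))) (hadj : (WM c).Adj u v)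
    (e : Sym2 (ZMod (2*(2*c)))) (he : e ∈ (route h u v hadj).edges) :
    (u.val = 0 ∧ e ∈ (hubWalk h v.val (vlt v)).edges) ∨
    (v.val = 0 ∧ e ∈ (hubWalk h u.val (vlt u)).edges) ∨
    (v.val = u.val + 1 ∧ u.val % 2 = 1 ∧ e = s((u.val : ZMod m), ↑(u.val+1))) ∨
    (u.val = v.val + 1 ∧ v.val % 2 = 1 ∧ e = s((v.val : ZMod m), ↑(v.val+1))) := by
  have h2 := (wm_adj hadj).2
  have hne : u.val ≠ v.val := fun hval => (wm_adj hadj).1 (Fin.ext hval)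
  unfold route at he
  split_ifs at he with hu hv hw
  · rw [Walk.edges_copy] at he
    exact Or.inl ⟨hu, he⟩
  · rw [Walk.edges_reverse, List.mem_reverse, Walk.edges_copy] at he
    exact Or.inr (Or.inl ⟨hv, he⟩)
  · rw [Walk.edges_copy, bladeWalk_edges, List.mem_singleton] at he
    exact Or.inr (Or.inr (Or.inl ⟨hw, by omega, he⟩))
  · rw [Walk.edges_reverse, List.mem_reverse, Walk.edges_copy, bladeWalk_edges,
      List.mem_singleton] at he
    exact Or.inr (Or.inr (Or.inr ⟨by omega, by omega, he⟩))


lemma finm_eq_self (h : 4 ≤ c) (v : Fin (2*(2*c))) : finm h v.val = v :=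
  Fin.ext (finm_val h v.isLt)

theorem upper (h : 4 ≤ c) (heven : c % 2 = 0) :
    ∃ R : RoutedEmbedding (windmillGraph (2*c)) (circulantG (2*(2*c)) {1, c}),
      ∀ e ∈ (circulantG (2*(2*c)) {1, c}).edgeSet,
        congestion _ _ R e ≤ c := by
  refine ⟨⟨ι h, route h, route_isPath h, route_symm h⟩, ?_⟩
  intro e he
  obtain ⟨a, ham, hform⟩ := edge_form h he
  unfold congestion
  rcases hform with hform | hform
  · -- cycle edge s(a, a+1)
    by_cases hb : a % 2 = 1 ∧ a + 3 ≤ 4*c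
    · -- blade possible
      set F : Finset (Sym2 (Fin (2*(2*c)))) :=
        ((Icyc c a).image (fun j => s(hubF h, finm h j))) ∪ {s(finm h a, finm h (a+1))} with hF
      refine le_trans (le_trans (Set.ncard_le_ncard (fun d hd => ?_) F.finite_toSet)
        (le_of_eq (Set.ncard_coe_finset F))) ?_
      · obtain ⟨-, u, v, hadj, rfl, he'⟩ := hd
        have hcases := route_cases h u v hadj e he'
        rcases hcases with ⟨hu0, hh⟩ | ⟨hv0, hh⟩ | ⟨hw, hodd, hee⟩ | ⟨hw, hodd, hee⟩
        · rw [hform] at hh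
          have hj := mem_Icyc h (mem_hub_cycle h (by omega) hh)
          have hu : u = hubF h := Fin.ext hu0
          refine Finset.mem_coe.mpr (Finset.mem_union_left _ (Finset.mem_image.mpr
            ⟨v.val, hj, ?_⟩))
          rw [← hu, finm_eq_self h v]
        · rw [hform] at hh
          have hj := mem_Icyc h (mem_hub_cycle h (by omega) hh)
          have hv : v = hubF h := Fin.ext hv0
          refine Finset.mem_coe.mpr (Finset.mem_union_left _ (Finset.mem_image.mpr
            ⟨u.val, hj, ?_⟩))
          rw [← hv, finm_eq_self h u]
          exact Sym2.eq_swap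
        · have hau : a = u.val := eqA h ham (by have := u.isLt; omega) (hform ▸ hee)
          refine Finset.mem_coe.mpr (Finset.mem_union_right _ (Finset.mem_singleton.mpr ?_))
          rw [hau, finm_eq_self h u, show u.val + 1 = v.val from hw.symm, finm_eq_self h v]
        · have hau : a = v.val := eqA h ham (by have := v.isLt; omega) (hform ▸ hee)
          refine Finset.mem_coe.mpr (Finset.mem_union_right _ (Finset.mem_singleton.mpr ?_))
          rw [hau, finm_eq_self h v, show v.val + 1 = u.val from hw.symm, finm_eq_self h u]
          exact Sym2.eq_swap
      · calc F.card ≤ ((Icyc c a).image (fun j => s(hubF h, finm h j))).card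
              + ({s(finm h a, finm h (a+1))} : Finset _).card := Finset.card_union_le _ _
          _ ≤ (c - 1) + 1 := by
              gcongr
              · exact le_trans Finset.card_image_le (card_Icyc_le_of_odd h heven hb.1 hb.2)
              · exact le_of_eq (Finset.card_singleton _)
          _ ≤ c := by omega
    · -- no blade through this edge
      set F : Finset (Sym2 (Fin (2*(2*c)))) :=
        (Icyc c a).image (fun j => s(hubF h, finm h j)) with hF
      refine le_trans (le_trans (Set.ncard_le_ncard (fun d hd => ?_) F.finite_toSet)
        (le_of_eq (Set.ncard_coe_finset F))) ?_
      · obtain ⟨-, u, v, hadj, rfl, he'⟩ := hd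
        have hcases := route_cases h u v hadj e he'
        rcases hcases with ⟨hu0, hh⟩ | ⟨hv0, hh⟩ | ⟨hw, hodd, hee⟩ | ⟨hw, hodd, hee⟩
        · rw [hform] at hh
          have hj := mem_Icyc h (mem_hub_cycle h (by omega) hh)
          have hu : u = hubF h := Fin.ext hu0
          refine Finset.mem_coe.mpr (Finset.mem_image.mpr ⟨v.val, hj, ?_⟩)
          rw [← hu, finm_eq_self h v]
        · rw [hform] at hh
          have hj := mem_Icyc h (mem_hub_cycle h (by omega) hh)
          have hv : v = hubF h := Fin.ext hv0
          refine Finset.mem_coe.mpr (Finset.mem_image.mpr ⟨u.val, hj, ?_⟩)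
          rw [← hv, finm_eq_self h u]
          exact Sym2.eq_swap
        · have hau : a = u.val := eqA h ham (by have := u.isLt; omega) (hform ▸ hee)
          exact absurd ⟨by omega, by have := v.isLt; omega⟩ hb
        · have hau : a = v.val := eqA h ham (by have := v.isLt; omega) (hform ▸ hee)
          exact absurd ⟨by omega, by have := u.isLt; omega⟩ hb
      · exact le_trans Finset.card_image_le (card_Icyc_le h (by omega))
  · -- chord edge s(a, a+c)
    set F : Finset (Sym2 (Fin (2*(2*c)))) :=
      (Ichd c a).image (fun j => s(hubF h, finm h j)) with hF
    refine le_trans (le_trans (Set.ncard_le_ncard (fun d hd => ?_) F.finite_toSet)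
      (le_of_eq (Set.ncard_coe_finset F))) ?_
    · obtain ⟨-, u, v, hadj, rfl, he'⟩ := hd
      have hcases := route_cases h u v hadj e he'
      rcases hcases with ⟨hu0, hh⟩ | ⟨hv0, hh⟩ | ⟨hw, hodd, hee⟩ | ⟨hw, hodd, hee⟩
      · rw [hform] at hh
        have hj := mem_Ichd h (mem_hub_chord h (by omega) hh)
        have hu : u = hubF h := Fin.ext hu0
        refine Finset.mem_coe.mpr (Finset.mem_image.mpr ⟨v.val, hj, ?_⟩)
        rw [← hu, finm_eq_self h v]
      · rw [hform] at hh
        have hj := mem_Ichd h (mem_hub_chord h (by omega) hh)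
        have hv : v = hubF h := Fin.ext hv0
        refine Finset.mem_coe.mpr (Finset.mem_image.mpr ⟨u.val, hj, ?_⟩)
        rw [← hv, finm_eq_self h u]
        exact Sym2.eq_swap
      · exact absurd (hform ▸ hee).symm (eqB h)
      · exact absurd (hform ▸ hee).symm (eqB h)
    · exact le_trans Finset.card_image_le (card_Ichd_le h a)


lemma exists_first_edge {V : Type*} {G : SimpleGraph V} {u v : V} (hne : u ≠ v)
    (w : G.Walk u v) : ∃ x, G.Adj u x ∧ s(u, x) ∈ w.edges := by
  cases w with
  | nil => exact absurd rfl hne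
  | cons hx p => exact ⟨_, hx, by simp⟩

theorem lower (h : 4 ≤ c)
    (R : RoutedEmbedding (windmillGraph (2*c)) (circulantG (2*(2*c)) {1, c})) :
    ∃ e ∈ (circulantG (2*(2*c)) {1, c}).edgeSet, c ≤ congestion _ _ R e := by
  haveI : NeZero (2*(2*c)) := ⟨by omega⟩
  by_contra hcon
  push_neg at hcon
  set w0 := R.toEquiv (hubF h) with hw0
  have hadj : ∀ v : Fin (2*(2*c)), v ≠ hubF h → (windmillGraph (2*c)).Adj (hubF h) v :=
    fun v hv => ⟨fun e => hv e.symm, Or.inl rfl⟩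
  have key : ∀ v : Fin (2*(2*c)), ∀ hv : v ≠ hubF h, ∃ x : ZMod (2*(2*c)),
      (HG c).Adj w0 x ∧ s(w0, x) ∈ (R.route (hubF h) v (hadj v hv)).edges := by
    intro v hv
    have hne : w0 ≠ R.toEquiv v := fun hh => hv (R.toEquiv.injective hh).symm
    exact exists_first_edge hne (R.route (hubF h) v (hadj v hv))
  choose g hg using key
  set A : ZMod (2*(2*c)) → Set (Fin (2*(2*c))) :=
    fun δ => {v | ∃ hv : v ≠ hubF h, g v hv = δ} with hA
  have cover : {v : Fin (2*(2*c)) | v ≠ hubF h} ⊆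
      A (w0 + ((1:ℕ) : ZMod (2*(2*c)))) ∪ A (w0 - ((1:ℕ) : ZMod (2*(2*c)))) ∪
      A (w0 + ((c:ℕ) : ZMod (2*(2*c)))) ∪ A (w0 - ((c:ℕ) : ZMod (2*(2*c)))) := by
    intro v hv
    obtain ⟨hne, hd⟩ := (hg v hv).1
    simp only [Set.mem_insert_iff, Set.mem_singleton_iff] at hd
    rcases hd with (hd | hd) | (hd | hd)
    · have := sub_val_eq h hd
      refine Or.inl (Or.inl (Or.inr ⟨hv, ?_⟩))
      rw [show g v hv = w0 - ((1:ℕ) : ZMod (2*(2*c))) by linear_combination -this]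
    · have := sub_val_eq h hd
      refine Or.inr ⟨hv, ?_⟩
      rw [show g v hv = w0 - ((c:ℕ) : ZMod (2*(2*c))) by linear_combination -this]
    · have := sub_val_eq h hd
      refine Or.inl (Or.inl (Or.inl ⟨hv, ?_⟩))
      rw [show g v hv = w0 + ((1:ℕ) : ZMod (2*(2*c))) by linear_combination this]
    · have := sub_val_eq h hd
      refine Or.inl (Or.inr ⟨hv, ?_⟩)
      rw [show g v hv = w0 + ((c:ℕ) : ZMod (2*(2*c))) by linear_combination this]
  have hAcard : ∀ δ : ZMod (2*(2*c)), (A δ).ncard ≤ c - 1 := by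
    intro δ
    rcases Set.eq_empty_or_nonempty (A δ) with hemp | ⟨v0, hv0, hgv0⟩
    · rw [hemp, Set.ncard_empty]; omega
    · have hadj0 : (HG c).Adj w0 δ := hgv0 ▸ (hg v0 hv0).1
      have hee : s(w0, δ) ∈ (HG c).edgeSet := hadj0
      have hle : (A δ).ncard ≤ congestion _ _ R s(w0, δ) := by
        refine Set.ncard_le_ncard_of_injOn (fun v => s(hubF h, v)) ?_ ?_ (Set.toFinite _)
        · rintro v ⟨hv, hgv⟩
          refine ⟨(windmillGraph (2*c)).mem_edgeSet.mpr (hadj v hv), hubF h, v, hadj v hv,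
            rfl, ?_⟩
          have := (hg v hv).2
          rwa [hgv] at this
        · rintro v ⟨hv, -⟩ v' ⟨hv', -⟩ hvv
          rcases Sym2.eq_iff.mp hvv with ⟨-, hx⟩ | ⟨hx, hy⟩
          · exact hx
          · exact absurd hy hv
      have := hcon s(w0, δ) hee
      omega
  have hcompl : ({v : Fin (2*(2*c)) | v ≠ hubF h}).ncard = 2*(2*c) - 1 := by
    rw [show {v : Fin (2*(2*c)) | v ≠ hubF h} = ({hubF h} : Set (Fin (2*(2*c))))ᶜ by
      rw [Set.compl_singleton_eq]]
    have h2 := Set.ncard_add_ncard_compl ({hubF h} : Set (Fin (2*(2*c))))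
    rw [Set.ncard_singleton, Nat.card_eq_fintype_card, Fintype.card_fin] at h2
    omega
  have hbound := Set.ncard_le_ncard cover (Set.toFinite _)
  have hu1 := Set.ncard_union_le
    (A (w0 + ((1:ℕ) : ZMod (2*(2*c)))) ∪ A (w0 - ((1:ℕ) : ZMod (2*(2*c)))) ∪
      A (w0 + ((c:ℕ) : ZMod (2*(2*c))))) (A (w0 - ((c:ℕ) : ZMod (2*(2*c)))))
  have hu2 := Set.ncard_union_le
    (A (w0 + ((1:ℕ) : ZMod (2*(2*c)))) ∪ A (w0 - ((1:ℕ) : ZMod (2*(2*c)))))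
    (A (w0 + ((c:ℕ) : ZMod (2*(2*c)))))
  have hu3 := Set.ncard_union_le (A (w0 + ((1:ℕ) : ZMod (2*(2*c)))))
    (A (w0 - ((1:ℕ) : ZMod (2*(2*c)))))
  have c1 := hAcard (w0 + ((1:ℕ) : ZMod (2*(2*c))))
  have c2 := hAcard (w0 - ((1:ℕ) : ZMod (2*(2*c))))
  have c3 := hAcard (w0 + ((c:ℕ) : ZMod (2*(2*c))))
  have c4 := hAcard (w0 - ((c:ℕ) : ZMod (2*(2*c))))
  omega

end WMCG

theorem congestion_windmill_circulant (n : ℕ) (hn : 4 ≤ n) :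
    (∀ R : RoutedEmbedding (windmillGraph (2 ^ (n - 1)))
        (circulantG (2 ^ n) {1, 2 ^ (n - 2)}),
      ∃ e ∈ (circulantG (2 ^ n) {1, 2 ^ (n - 2)}).edgeSet,
        2 ^ (n - 2) ≤ congestion _ _ R e) ∧
    (∃ R : RoutedEmbedding (windmillGraph (2 ^ (n - 1)))
        (circulantG (2 ^ n) {1, 2 ^ (n - 2)}),
      ∀ e ∈ (circulantG (2 ^ n) {1, 2 ^ (n - 2)}).edgeSet,
        congestion _ _ R e ≤ 2 ^ (n - 2)) := by
  have hk : 2 ^ (n - 1) = 2 * 2 ^ (n - 2) := by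
    rw [← pow_succ']
    congr 1
    omega
  have hm : 2 ^ n = 2 * (2 * 2 ^ (n - 2)) := by
    rw [← pow_succ', ← pow_succ']
    congr 1
    omega
  have hc : 4 ≤ 2 ^ (n - 2) := by
    calc (4:ℕ) = 2 ^ 2 := by norm_num
      _ ≤ 2 ^ (n - 2) := Nat.pow_le_pow_right (by norm_num) (by omega)
  have heven : 2 ^ (n - 2) % 2 = 0 := by
    have h3 : 2 ^ (n - 2) = 2 * 2 ^ (n - 3) := by
      rw [← pow_succ']
      congr 1
      omega
    omega
  rw [hk, hm]
  exact ⟨fun R => WMCG.lower hc R, WMCG.upper hc heven⟩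
end

section
/- Let H be a connected finite simple graph on n ≥ 3 vertices and let u be a median of H, i.e., a vertex minimizing δ(u) = Σ_{v ∈ V(H)} dist_H(u, v). Then WL(F_n, H) ≥ (n − 2) + δ(u): every bijection f from the vertices of the fan F_n to the vertices of H has wirelength at least (n − 2) + δ(u). -/
open SimpleGraph

/-- Fan graph on `Fin n`: core `0`, path `1, …, n-1`. -/
def fanGraph (n : ℕ) : SimpleGraph (Fin n) where
  Adj x y := x ≠ y ∧ (x.val = 0 ∨ y.val = 0 ∨ y.val = x.val + 1 ∨ x.val = y.val + 1)
  symm := ⟨by rintro x y ⟨h1, h2⟩; exact ⟨h1.symm, by tauto⟩⟩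
  loopless := ⟨by rintro x ⟨h1, -⟩; exact h1 rfl⟩

open scoped Classical in
/-- The wirelength of a vertex mapping `f`: the sum over edges of `G` of the distance
in `H` between the images of the endpoints. -/
noncomputable def wirelength {α β : Type*} [Fintype α] (G : SimpleGraph α) (H : SimpleGraph β)
    (f : α → β) : ℕ :=
  ∑ e ∈ G.edgeSet.toFinset,
    Sym2.lift ⟨fun a b => H.dist (f a) (f b), fun _ _ => SimpleGraph.dist_comm⟩ e

theorem wirelength_fan_lower_bound
    {V : Type*} [Fintype V] [DecidableEq V] (H : SimpleGraph V) (n : ℕ)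
    (hcard : Fintype.card V = n) (hn : 3 ≤ n) (hconn : H.Connected)
    (u : V) (hmed : ∀ v : V, (∑ w : V, H.dist u w) ≤ ∑ w : V, H.dist v w)
    (f : Fin n ≃ V) :
    (n - 2) + ∑ w : V, H.dist u w ≤ wirelength (fanGraph n) H f := by
  classical
  have hn0 : 0 < n := by omega
  set z : Fin n := ⟨0, hn0⟩ with hz
  set L : Sym2 (Fin n) → ℕ :=
    Sym2.lift ⟨fun a b => H.dist (f a) (f b), fun _ _ => SimpleGraph.dist_comm⟩ with hL
  have hLmk : ∀ a b : Fin n, L s(a, b) = H.dist (f a) (f b) := fun a b => rfl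
  set g : Fin n → Fin n := fun i => ⟨(i.val + 1) % n, Nat.mod_lt _ hn0⟩ with hg
  have hgval : ∀ i : Fin n, i.val ≤ n - 2 → (g i).val = i.val + 1 := by
    intro i hi
    simp only [hg]
    exact Nat.mod_eq_of_lt (by omega)
  set star : Finset (Sym2 (Fin n)) := (Finset.univ.erase z).image (fun i => s(z, i)) with hstar
  set pathE : Finset (Sym2 (Fin n)) :=
    (Finset.univ.filter (fun i : Fin n => 1 ≤ i.val ∧ i.val ≤ n - 2)).image
      (fun i => s(i, g i)) with hpathE
  -- subset of edges
  have hsub : star ∪ pathE ⊆ (fanGraph n).edgeSet.toFinset := by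
    intro e he
    rw [Set.mem_toFinset]
    rcases Finset.mem_union.1 he with h | h
    · obtain ⟨i, hi, rfl⟩ := Finset.mem_image.1 h
      have hiz : i ≠ z := (Finset.mem_erase.1 hi).1
      exact ⟨fun hc => hiz (by simpa using hc.symm), Or.inl rfl⟩
    · obtain ⟨i, hi, rfl⟩ := Finset.mem_image.1 h
      obtain ⟨hi1, hi2⟩ := (Finset.mem_filter.1 hi).2
      have hv := hgval i hi2
      refine ⟨?_, Or.inr (Or.inr (Or.inl hv))⟩
      intro hc
      have : i.val = (g i).val := congrArg Fin.val hc
      omega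
  -- disjointness
  have hdisj : Disjoint star pathE := by
    rw [Finset.disjoint_left]
    intro e he hp
    obtain ⟨i, hi, rfl⟩ := Finset.mem_image.1 he
    obtain ⟨j, hj, hje⟩ := Finset.mem_image.1 hp
    obtain ⟨hj1, hj2⟩ := (Finset.mem_filter.1 hj).2
    have hv := hgval j hj2
    have hz0 : z.val = 0 := rfl
    rcases Sym2.eq_iff.1 hje with ⟨h1, h2⟩ | ⟨h1, h2⟩
    · have e1 := congrArg Fin.val h1
      omega
    · have e2 := congrArg Fin.val h2
      omega
  -- evaluate the star sum
  have hstarsum : ∑ w : V, H.dist u w ≤ ∑ e ∈ star, L e := by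
    rw [hstar, Finset.sum_image]
    · have h1 : ∑ i ∈ Finset.univ.erase z, L s(z, i)
          = ∑ i ∈ Finset.univ.erase z, H.dist (f z) (f i) := by
        apply Finset.sum_congr rfl; intro i _; exact hLmk z i
      rw [h1]
      have h2 : H.dist (f z) (f z) + ∑ i ∈ Finset.univ.erase z, H.dist (f z) (f i)
          = ∑ i : Fin n, H.dist (f z) (f i) :=
        Finset.add_sum_erase Finset.univ (fun i => H.dist (f z) (f i)) (Finset.mem_univ z)
      have h3 : ∑ i : Fin n, H.dist (f z) (f i) = ∑ w : V, H.dist (f z) w :=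
        Equiv.sum_comp f (fun w => H.dist (f z) w)
      have h4 := hmed (f z)
      have h5 : H.dist (f z) (f z) = 0 := SimpleGraph.dist_self
      omega
    · intro a ha b hb hab
      rcases Sym2.eq_iff.1 hab with ⟨-, h⟩ | ⟨h1, h2⟩
      · exact h
      · exact absurd h2 (Finset.mem_erase.1 ha).1
  -- evaluate the path sum
  have hcardfilt :
      (Finset.univ.filter (fun i : Fin n => 1 ≤ i.val ∧ i.val ≤ n - 2)).card = n - 2 := by
    have himg : (Finset.univ.filter (fun i : Fin n => 1 ≤ i.val ∧ i.val ≤ n - 2)).image Fin.val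
        = Finset.Icc 1 (n - 2) := by
      ext k
      simp only [Finset.mem_image, Finset.mem_filter, Finset.mem_univ, true_and,
        Finset.mem_Icc]
      constructor
      · rintro ⟨i, ⟨h1, h2⟩, rfl⟩; exact ⟨h1, h2⟩
      · rintro ⟨h1, h2⟩; exact ⟨⟨k, by omega⟩, ⟨h1, h2⟩, rfl⟩
    rw [← Finset.card_image_of_injective _ Fin.val_injective, himg, Nat.card_Icc]
    omega
  have hpathsum : n - 2 ≤ ∑ e ∈ pathE, L e := by
    rw [hpathE, Finset.sum_image]
    · calc n - 2 = ∑ _i ∈ Finset.univ.filter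
            (fun i : Fin n => 1 ≤ i.val ∧ i.val ≤ n - 2), 1 := by
            rw [Finset.sum_const, hcardfilt, smul_eq_mul, mul_one]
        _ ≤ _ := by
            apply Finset.sum_le_sum
            intro i hi
            obtain ⟨h1, h2⟩ := (Finset.mem_filter.1 hi).2
            rw [hLmk]
            have hne : i ≠ g i := by
              intro hc
              have := congrArg Fin.val hc
              have hv := hgval i h2
              omega
            exact hconn.pos_dist_of_ne (f.injective.ne hne)
    · intro a ha b hb hab
      obtain ⟨-, ha2⟩ := (Finset.mem_filter.1 ha).2
      obtain ⟨-, hb2⟩ := (Finset.mem_filter.1 hb).2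
      rcases Sym2.eq_iff.1 hab with ⟨h, -⟩ | ⟨h1, h2⟩
      · exact h
      · have hva := hgval a ha2
        have hvb := hgval b hb2
        have e1 := congrArg Fin.val h1
        have e2 := congrArg Fin.val h2
        exact absurd rfl (by apply Fin.ne_of_val_ne; omega : a ≠ a)
  calc n - 2 + ∑ w : V, H.dist u w
      ≤ (∑ e ∈ pathE, L e) + ∑ e ∈ star, L e := add_le_add hpathsum hstarsum
    _ = ∑ e ∈ star ∪ pathE, L e := by
        rw [Finset.sum_union hdisj, add_comm]
    _ ≤ wirelength (fanGraph n) H f := by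
        unfold wirelength
        exact Finset.sum_le_sum_of_subset (by
          intro e he
          rw [Set.mem_toFinset]
          have := hsub he
          rwa [Set.mem_toFinset] at this)
end

section
/- Let H be a connected finite simple graph on n ≥ 3 vertices and let u be a median of H, i.e., a vertex minimizing δ(u) = Σ_{v ∈ V(H)} dist_H(u, v). If H − u contains a Hamiltonian path, then WL(F_n, H) = (n − 2) + δ(u); in particular there exists a bijection f from the vertices of the fan F_n to the vertices of H with wirelength exactly (n − 2) + δ(u). -/
open SimpleGraph

/-! ### Auxiliary definitions and lemmas -/

/-- `i` (for `i < n`) as an element of `Fin n`. -/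
def fv (n : ℕ) (hn : 0 < n) (i : ℕ) : Fin n := ⟨i % n, Nat.mod_lt _ hn⟩

lemma fv_val {n : ℕ} {hn : 0 < n} {i : ℕ} (h : i < n) : (fv n hn i).val = i :=
  Nat.mod_eq_of_lt h

lemma fv_eq {n : ℕ} {hn : 0 < n} {i : ℕ} (h : i < n) {c : Fin n} (hc : i = c.val) :
    fv n hn i = c := Fin.ext ((fv_val h).trans hc)

/-- Core edges of the fan. -/
def coreE {n : ℕ} (hn : 3 ≤ n) : Finset (Sym2 (Fin n)) :=
  (Finset.Ico 1 n).image (fun i => s(fv n (by omega) 0, fv n (by omega) i))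

/-- Path edges of the fan. -/
def pathE {n : ℕ} (hn : 3 ≤ n) : Finset (Sym2 (Fin n)) :=
  (Finset.Ico 1 (n-1)).image (fun i => s(fv n (by omega) i, fv n (by omega) (i+1)))

lemma fan_edgeSet_eq {n : ℕ} (hn : 3 ≤ n) :
    (fanGraph n).edgeSet = ↑(coreE hn ∪ pathE hn) := by
  ext e
  induction e with
  | _ a b =>
    simp only [mem_edgeSet, Finset.coe_union, Set.mem_union, Finset.coe_image,
      Set.mem_image, Finset.coe_Ico, Set.mem_Ico, coreE, pathE]
    constructor
    · rintro ⟨hne, hadj⟩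
      have hne' : a.val ≠ b.val := fun h => hne (Fin.ext h)
      have ha := a.isLt; have hb := b.isLt
      rcases hadj with h | h | h | h
      · exact Or.inl ⟨b.val, ⟨by omega, hb⟩,
          by rw [Sym2.eq_iff]; exact Or.inl ⟨fv_eq (by omega) (by omega), fv_eq hb rfl⟩⟩
      · exact Or.inl ⟨a.val, ⟨by omega, ha⟩,
          by rw [Sym2.eq_iff]; exact Or.inr ⟨fv_eq (by omega) (by omega), fv_eq ha rfl⟩⟩
      · rcases Nat.eq_zero_or_pos a.val with h0a | h0a
        · exact Or.inl ⟨b.val, ⟨by omega, hb⟩,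
            by rw [Sym2.eq_iff]; exact Or.inl ⟨fv_eq (by omega) (by omega), fv_eq hb rfl⟩⟩
        · exact Or.inr ⟨a.val, ⟨by omega, by omega⟩,
            by rw [Sym2.eq_iff]; exact Or.inl ⟨fv_eq ha rfl, fv_eq (by omega) (by omega)⟩⟩
      · rcases Nat.eq_zero_or_pos b.val with h0b | h0b
        · exact Or.inl ⟨a.val, ⟨by omega, ha⟩,
            by rw [Sym2.eq_iff]; exact Or.inr ⟨fv_eq (by omega) (by omega), fv_eq ha rfl⟩⟩
        · exact Or.inr ⟨b.val, ⟨by omega, by omega⟩,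
            by rw [Sym2.eq_iff]; exact Or.inr ⟨fv_eq hb rfl, fv_eq (by omega) (by omega)⟩⟩
    · rintro (⟨i, ⟨hi1, hi2⟩, he⟩ | ⟨i, ⟨hi1, hi2⟩, he⟩) <;>
        rw [Sym2.eq_iff] at he <;>
        rcases he with ⟨h1, h2⟩ | ⟨h1, h2⟩ <;>
        [skip; skip; skip; skip] <;>
        (try replace h1 := (fv_val (show (0:ℕ) < n by omega)).symm.trans (congrArg Fin.val h1)) <;>
        (try replace h1 := (fv_val (show i < n by omega)).symm.trans (congrArg Fin.val h1)) <;>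
        (try replace h2 := (fv_val (show i < n by omega)).symm.trans (congrArg Fin.val h2)) <;>
        (try replace h2 := (fv_val (show i+1 < n by omega)).symm.trans (congrArg Fin.val h2)) <;>
        exact ⟨fun hab => by have := congrArg Fin.val hab; omega, by omega⟩

lemma wirelength_fan {V : Type*} (H : SimpleGraph V) {n : ℕ} (hn : 3 ≤ n) (f : Fin n → V) :
    wirelength (fanGraph n) H f =
      (∑ i ∈ Finset.Ico 1 n, H.dist (f (fv n (by omega) 0)) (f (fv n (by omega) i))) +
      ∑ i ∈ Finset.Ico 1 (n-1), H.dist (f (fv n (by omega) i)) (f (fv n (by omega) (i+1))) := by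
  classical
  have h0 : 0 < n := by omega
  have hE : (fanGraph n).edgeSet.toFinset = coreE hn ∪ pathE hn := by
    rw [Set.toFinset_congr (fan_edgeSet_eq hn), Finset.toFinset_coe]
  rw [wirelength]
  rw [Finset.sum_congr hE (fun _ _ => rfl)]
  have hdisj : Disjoint (coreE hn) (pathE hn) := by
    rw [Finset.disjoint_left]
    rintro e he1 he2
    simp only [coreE, pathE, Finset.mem_image, Finset.mem_Ico] at he1 he2
    obtain ⟨i, ⟨hi1, hi2⟩, hei⟩ := he1
    obtain ⟨j, ⟨hj1, hj2⟩, hej⟩ := he2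
    rw [← hej, Sym2.eq_iff] at hei
    rcases hei with ⟨h1, -⟩ | ⟨h1, -⟩
    · have h1v := congrArg Fin.val h1
      rw [fv_val (show (0:ℕ) < n by omega), fv_val (show j < n by omega)] at h1v
      omega
    · have h1v := congrArg Fin.val h1
      rw [fv_val (show (0:ℕ) < n by omega), fv_val (show j+1 < n by omega)] at h1v
      omega
  rw [Finset.sum_union hdisj]
  congr 1
  · rw [coreE, Finset.sum_image ?_]
    · simp only [Sym2.lift_mk]
    · intro i hi j hj hij
      simp only [Finset.mem_coe, Finset.mem_Ico] at hi hj
      rw [Sym2.eq_iff] at hij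
      rcases hij with ⟨-, h2⟩ | ⟨h1, -⟩
      · have h2v := congrArg Fin.val h2
        rw [fv_val (show i < n by omega), fv_val (show j < n by omega)] at h2v
        exact h2v
      · have h1v := congrArg Fin.val h1
        rw [fv_val (show (0:ℕ) < n by omega), fv_val (show j < n by omega)] at h1v
        omega
  · rw [pathE, Finset.sum_image ?_]
    · simp only [Sym2.lift_mk]
    · intro i hi j hj hij
      simp only [Finset.mem_coe, Finset.mem_Ico] at hi hj
      rw [Sym2.eq_iff] at hij
      rcases hij with ⟨h1, -⟩ | ⟨h1, h2⟩
      · have h1v := congrArg Fin.val h1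
        rw [fv_val (show i < n by omega), fv_val (show j < n by omega)] at h1v
        exact h1v
      · have h1v := congrArg Fin.val h1
        have h2v := congrArg Fin.val h2
        rw [fv_val (show i < n by omega), fv_val (show j+1 < n by omega)] at h1v
        rw [fv_val (show i+1 < n by omega), fv_val (show j < n by omega)] at h2v
        omega

lemma core_sum_eq {V : Type*} [Fintype V] (H : SimpleGraph V) {n : ℕ} (hn : 3 ≤ n)
    (f : Fin n ≃ V) :
    ∑ i ∈ Finset.Ico 1 n, H.dist (f (fv n (by omega) 0)) (f (fv n (by omega) i)) =
      ∑ v : V, H.dist (f (fv n (by omega) 0)) v := by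
  have h0 : 0 < n := by omega
  set c := f (fv n h0 0) with hc
  have key : ∑ i ∈ Finset.Ico 0 n, H.dist c (f (fv n h0 i)) =
      H.dist c (f (fv n h0 0)) + ∑ i ∈ Finset.Ico 1 n, H.dist c (f (fv n h0 i)) :=
    Finset.sum_eq_sum_Ico_succ_bot h0 _
  rw [← hc, SimpleGraph.dist_self, zero_add] at key
  rw [← key, ← Finset.range_eq_Ico,
    ← Fin.sum_univ_eq_sum_range (fun i => H.dist c (f (fv n h0 i))) n,
    Finset.sum_congr rfl (fun x _ => by rw [fv_eq x.isLt rfl])]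
  exact Equiv.sum_comp f (fun v => H.dist c v)

lemma getVert_eq_support_getElem {V : Type*} {G : SimpleGraph V} {a b : V} (p : G.Walk a b)
    {i : ℕ} (h : i < p.support.length) : p.support[i] = p.getVert i := by
  induction p generalizing i with
  | nil =>
    simp only [SimpleGraph.Walk.support_nil, List.length_singleton] at h
    interval_cases i
    · simp [SimpleGraph.Walk.getVert]
  | cons hadj q ih =>
    cases i with
    | zero => simp
    | succ i =>
      simp only [SimpleGraph.Walk.support_cons, List.length_cons] at h
      simpa [SimpleGraph.Walk.getVert_cons_succ] using ih (Nat.lt_of_succ_lt_succ h)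

lemma IsPath.getVert_inj {V : Type*} {G : SimpleGraph V} {a b : V} {p : G.Walk a b}
    (hp : p.IsPath) {i j : ℕ} (hi : i ≤ p.length) (hj : j ≤ p.length)
    (h : p.getVert i = p.getVert j) : i = j := by
  have hl := p.length_support
  have hi' : i < p.support.length := by omega
  have hj' : j < p.support.length := by omega
  have := (hp.support_nodup.getElem_inj_iff (hi := hi') (hj := hj'))
  rw [getVert_eq_support_getElem p hi', getVert_eq_support_getElem p hj'] at this
  exact this.mp h

theorem wirelength_fan_eq_of_hamiltonian_path
    {V : Type*} [Fintype V] [DecidableEq V] (H : SimpleGraph V) (n : ℕ)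
    (hcard : Fintype.card V = n) (hn : 3 ≤ n) (hconn : H.Connected)
    (u : V) (hmed : ∀ v : V, (∑ w : V, H.dist u w) ≤ ∑ w : V, H.dist v w)
    (hham : ∃ (a b : ({u}ᶜ : Set V)) (p : (H.induce ({u}ᶜ : Set V)).Walk a b),
      p.IsHamiltonian) :
    (∀ f : Fin n ≃ V, (n - 2) + ∑ w : V, H.dist u w ≤ wirelength (fanGraph n) H f) ∧
    (∃ f : Fin n ≃ V, wirelength (fanGraph n) H f = (n - 2) + ∑ w : V, H.dist u w) := by
  have h0 : 0 < n := by omega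
  constructor
  · -- lower bound
    intro f
    rw [wirelength_fan H hn f, core_sum_eq H hn f]
    have hcore : ∑ w : V, H.dist u w ≤ ∑ v : V, H.dist (f (fv n h0 0)) v :=
      hmed _
    have hpath : (n - 2) ≤
        ∑ i ∈ Finset.Ico 1 (n-1), H.dist (f (fv n h0 i)) (f (fv n h0 (i+1))) := by
      have := Finset.card_nsmul_le_sum (Finset.Ico 1 (n-1))
        (fun i => H.dist (f (fv n h0 i)) (f (fv n h0 (i+1)))) 1 ?_
      · simpa [Nat.card_Ico] using this
      · intro i hi
        simp only [Finset.mem_Ico] at hi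
        refine hconn.pos_dist_of_ne (fun h => ?_)
        have := congrArg Fin.val (f.injective h)
        rw [fv_val (show i < n by omega), fv_val (show i+1 < n by omega)] at this
        omega
    omega
  · -- the optimal embedding
    obtain ⟨a, b, p, hp⟩ := hham
    have hcardS : Fintype.card ({u}ᶜ : Set V) = n - 1 := by
      rw [Fintype.card_compl_set, Set.card_singleton, hcard]
    have hlen : p.length = n - 2 := by
      rw [hp.length_eq, hcardS]; omega
    have hpath := hp.isPath
    set F : Fin n → V := fun x => if x.val = 0 then u else ↑(p.getVert (x.val - 1)) with hF
    have hne_u : ∀ k : ℕ, (↑(p.getVert k) : V) ≠ u := by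
      intro k hk
      have := (p.getVert k).2
      rw [hk] at this
      simp at this
    have hFinj : Function.Injective F := by
      intro x y hxy
      simp only [hF] at hxy
      by_cases hx : x.val = 0 <;> by_cases hy : y.val = 0
      · exact Fin.ext (hx.trans hy.symm)
      · rw [if_pos hx, if_neg hy] at hxy
        exact absurd hxy.symm (hne_u _)
      · rw [if_neg hx, if_pos hy] at hxy
        exact absurd hxy (hne_u _)
      · rw [if_neg hx, if_neg hy] at hxy
        have hxl := x.isLt; have hyl := y.isLt
        have := IsPath.getVert_inj hpath (i := x.val - 1) (j := y.val - 1)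
          (by omega) (by omega) (Subtype.coe_injective hxy)
        exact Fin.ext (by omega)
    have hbij : Function.Bijective F :=
      (Fintype.bijective_iff_injective_and_card F).mpr ⟨hFinj, by simp [hcard]⟩
    refine ⟨Equiv.ofBijective F hbij, ?_⟩
    have happ : ∀ x, (Equiv.ofBijective F hbij) x = F x := fun _ => rfl
    rw [wirelength_fan H hn _, core_sum_eq H hn _]
    have hf0 : (Equiv.ofBijective F hbij) (fv n h0 0) = u := by
      rw [happ, hF]
      simp only
      rw [if_pos (fv_val h0)]
    rw [hf0]
    have hpathsum : ∑ i ∈ Finset.Ico 1 (n-1),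
        H.dist ((Equiv.ofBijective F hbij) (fv n h0 i))
          ((Equiv.ofBijective F hbij) (fv n h0 (i+1))) = n - 2 := by
      rw [Finset.sum_congr rfl (fun i hi => ?_)]
      · rw [Finset.sum_const, Nat.card_Ico, smul_eq_mul, mul_one]
        omega
      · simp only [Finset.mem_Ico] at hi
        rw [happ, happ, hF]
        simp only
        rw [if_neg (by rw [fv_val (show i < n by omega)]; omega),
          if_neg (by rw [fv_val (show i+1 < n by omega)]; omega),
          fv_val (show i < n by omega), fv_val (show i+1 < n by omega), Nat.add_sub_cancel]
        have hadj : (H.induce ({u}ᶜ : Set V)).Adj (p.getVert (i-1)) (p.getVert (i-1+1)) :=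
          p.adj_getVert_succ (by omega)
        have h2 : i - 1 + 1 = i := by omega
        rw [h2] at hadj
        have hadj' : H.Adj ↑(p.getVert (i-1)) ↑(p.getVert i) := by
          simpa using hadj
        rw [SimpleGraph.dist_eq_one_iff_adj.mpr hadj']
    rw [hpathsum]
    omega
end
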